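/- arXiv:2304.02132 — 11 statements merged into one kernel-verified Lean document; each statement's English description precedes it below -/
import Mathlib

section
/- Suppose Λ is a directed partial order with no maximal element and 𝒮 = ⟨⟨S_u : u ∈ Λ⟩, ℛ⟩ is a Λ-system of finite width. Then 𝒮 has a cofinal branch. -/
/-!
Statement 1: Every Λ-system of finite width (Λ a directed partial order with no
maximal element) has a cofinal branch.
-/

universe u

open Cardinal

/-- `Λ` is `κ`-directed: every subset of size `< κ` has an upper bound. -/
def IsDir (Λ : Type u) [Preorder Λ] (κ : Cardinal.{u}) : Prop :=
  ∀ s : Set Λ, #s < κ → ∃ ub : Λ, ∀ x ∈ s, x ≤ ub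

/-- `⟨⟨S_u⟩, ℛ⟩` is a `Λ`-system, where the level of `x : σ` is `ℓ x` (so the
levels `S_u = ℓ ⁻¹' {u}` are automatically pairwise disjoint) and the set of
relations is `{R i | i : ι}`. -/
structure IsLSystem {Λ : Type u} [Preorder Λ] {σ ι : Type u}
    (ℓ : σ → Λ) (R : ι → σ → σ → Prop) : Prop where
  lvl_ne : ∀ u : Λ, ∃ x : σ, ℓ x = u
  idx_ne : Nonempty ι
  trans : ∀ i : ι, Transitive (R i)
  lt_lvl : ∀ (i : ι) (x y : σ), R i x y → ℓ x < ℓ y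
  treelike : ∀ (i : ι) (x y z : σ), R i x z → R i y z → ℓ x ≤ ℓ y → (R i x y ∨ x = y)
  complete : ∀ ⦃u v : Λ⦄, u < v → ∃ (i : ι) (x y : σ), ℓ x = u ∧ ℓ y = v ∧ R i x y

/-- The width of a system: `max(sup_u |S_u|, |ℛ|)`. -/
noncomputable def sysWidth {Λ : Type u} [Preorder Λ] {σ ι : Type u}
    (ℓ : σ → Λ) (_R : ι → σ → σ → Prop) : Cardinal.{u} :=
  max (⨆ u : Λ, #{x : σ // ℓ x = u}) #ι

/-- `x` and `y` are compatible with respect to the relation `r`. -/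
def SysCompat {σ : Type u} (r : σ → σ → Prop) (x y : σ) : Prop :=
  ∃ z : σ, (r x z ∨ x = z) ∧ (r y z ∨ y = z)

/-- `b` is a branch through the relation `r`: pairwise compatible. -/
def IsSysBranch {σ : Type u} (r : σ → σ → Prop) (b : Set σ) : Prop :=
  ∀ x ∈ b, ∀ y ∈ b, SysCompat r x y

/-- The system has a cofinal branch through one of its relations. -/
def HasCofBranch {Λ : Type u} [Preorder Λ] {σ ι : Type u}
    (ℓ : σ → Λ) (R : ι → σ → σ → Prop) : Prop :=
  ∃ (i : ι) (b : Set σ), IsSysBranch (R i) b ∧ ∀ u : Λ, ∃ x ∈ b, u ≤ ℓ x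

/-- Auxiliary: a finite nonempty type of cardinality at most `n` admits a
surjection from `Fin n`. -/
lemma exists_surj_fin {α : Type*} [Finite α] [Nonempty α] {n : ℕ}
    (h : Nat.card α ≤ n) : ∃ f : Fin n → α, Function.Surjective f := by
  obtain ⟨m, ⟨e⟩⟩ := Finite.exists_equiv_fin α
  have hm : Nat.card α = m := Nat.card_eq_of_equiv_fin e
  have hm0 : 0 < m := by
    rcases ‹Nonempty α› with ⟨a⟩
    exact (e a).pos
  refine ⟨fun k => e.symm ⟨min k (m - 1), by omega⟩, fun a => ?_⟩
  refine ⟨⟨(e a : ℕ), by have := (e a).isLt; omega⟩, ?_⟩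
  have h1 : min ((e a : ℕ)) (m - 1) = (e a : ℕ) := by
    have := (e a).isLt; omega
  simp only [h1]
  exact (by simp [e.symm_apply_apply a])

theorem stmt1 {Λ : Type u} [PartialOrder Λ]
    (hdir : IsDir Λ ℵ₀) (hnomax : ∀ u : Λ, ∃ v : Λ, u < v)
    {σ ι : Type u} (ℓ : σ → Λ) (R : ι → σ → σ → Prop)
    (hsys : IsLSystem ℓ R) (hfin : sysWidth ℓ R < ℵ₀) :
    HasCofBranch ℓ R := by
  classical
  -- Λ is nonempty and directed
  obtain ⟨u0, -⟩ := hdir ∅ (by simpa using Cardinal.aleph0_pos)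
  haveI : Nonempty Λ := ⟨u0⟩
  haveI : IsDirected Λ (· ≤ ·) := ⟨fun a b => by
    obtain ⟨ub, h⟩ := hdir {a, b}
      (((Set.finite_singleton b).insert a).lt_aleph0)
    exact ⟨ub, h a (by simp), h b (by simp)⟩⟩
  -- finiteness extraction
  have hι : (#ι) < ℵ₀ := lt_of_le_of_lt (le_max_right _ _) hfin
  haveI : Finite ι := Cardinal.lt_aleph0_iff_finite.mp hι
  have hsup : (⨆ u : Λ, #{x : σ // ℓ x = u}) < ℵ₀ := lt_of_le_of_lt (le_max_left _ _) hfin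
  obtain ⟨n, hn⟩ := Cardinal.lt_aleph0.mp hsup
  have hlev : ∀ u : Λ, #{x : σ // ℓ x = u} ≤ (n : Cardinal.{u}) := fun u =>
    hn ▸ le_ciSup (Cardinal.bddAbove_range _) u
  haveI hfinlev : ∀ u : Λ, Finite {x : σ // ℓ x = u} := fun u =>
    Cardinal.lt_aleph0_iff_finite.mp ((hlev u).trans_lt (Cardinal.nat_lt_aleph0 n))
  haveI hnelev : ∀ u : Λ, Nonempty {x : σ // ℓ x = u} := fun u =>
    (hsys.lvl_ne u).elim fun x hx => ⟨⟨x, hx⟩⟩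
  have hcard : ∀ u : Λ, Nat.card {x : σ // ℓ x = u} ≤ n := fun u => by
    have := Cardinal.toNat_le_toNat (hlev u) (Cardinal.nat_lt_aleph0 n)
    simpa [Nat.card] using this
  -- a surjective enumeration of each level
  have hs : ∀ u : Λ, ∃ f : Fin n → {x : σ // ℓ x = u}, Function.Surjective f := fun u =>
    exists_surj_fin (hcard u)
  choose s hssurj using hs
  -- an ultrafilter extending the tail filter
  haveI : (Filter.atTop : Filter Λ).NeBot := Filter.atTop_neBot
  set U : Ultrafilter Λ := Ultrafilter.of Filter.atTop with hUdef
  have hUp : ∀ u : Λ, Set.Ici u ∈ U := fun u =>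
    Ultrafilter.of_le Filter.atTop (Filter.Ici_mem_atTop u)
  have hgt : ∀ u : Λ, {w : Λ | u < w} ∈ U := fun u => by
    obtain ⟨u', hu'⟩ := hnomax u
    exact Filter.mem_of_superset (hUp u') fun v hv => lt_of_lt_of_le hu' hv
  -- the key step: for every `u` find a triple whose witness-set is large
  have key : ∀ u : Λ, ∃ c : ι × Fin n × Fin n,
      {w : Λ | R c.1 (s u c.2.1 : σ) (s w c.2.2 : σ)} ∈ U := by
    intro u
    by_contra hcon
    push_neg at hcon
    have hcomp : (⋂ c : ι × Fin n × Fin n,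
        {w : Λ | R c.1 (s u c.2.1 : σ) (s w c.2.2 : σ)}ᶜ) ∈ (U : Filter Λ) :=
      Filter.iInter_mem.mpr fun c =>
        (Ultrafilter.compl_mem_iff_notMem).mpr (hcon c)
    obtain ⟨w, hw⟩ := Filter.nonempty_of_mem (Filter.inter_mem hcomp (hgt u))
    obtain ⟨hw1, hw2⟩ := hw
    obtain ⟨i, x, y, hx, hy, hr⟩ := hsys.complete hw2
    obtain ⟨j, hj⟩ := hssurj u ⟨x, hx⟩
    obtain ⟨k, hk⟩ := hssurj w ⟨y, hy⟩
    have := Set.mem_iInter.mp hw1 (i, j, k)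
    apply this
    show R i (s u j : σ) (s w k : σ)
    rw [hj, hk]
    exact hr
  choose c hc using key
  -- find a cofinal class with constant (relation, top-index) data
  have hclass : ∃ p : ι × Fin n, ∀ u : Λ, ∃ v : Λ, u ≤ v ∧ ((c v).1, (c v).2.2) = p := by
    by_contra hcon
    push_neg at hcon
    choose g hg using hcon
    obtain ⟨ub, hub⟩ := hdir (Set.range g) ((Set.finite_range g).lt_aleph0)
    exact hg ((c ub).1, (c ub).2.2) ub (hub _ (Set.mem_range_self _)) rfl
  obtain ⟨⟨i0, k0⟩, hp⟩ := hclass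
  refine ⟨i0, {x : σ | ∃ u : Λ, ((c u).1, (c u).2.2) = (i0, k0) ∧ x = (s u (c u).2.1 : σ)},
    ?_, ?_⟩
  · rintro x ⟨ux, hcx, rfl⟩ y ⟨uy, hcy, rfl⟩
    obtain ⟨w, hw1, hw2⟩ := Filter.nonempty_of_mem (Filter.inter_mem (hc ux) (hc uy))
    have hx1 : (c ux).1 = i0 := congrArg Prod.fst hcx
    have hx2 : (c ux).2.2 = k0 := congrArg Prod.snd hcx
    have hy1 : (c uy).1 = i0 := congrArg Prod.fst hcy
    have hy2 : (c uy).2.2 = k0 := congrArg Prod.snd hcy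
    refine ⟨(s w k0 : σ), Or.inl ?_, Or.inl ?_⟩
    · have : R (c ux).1 (s ux (c ux).2.1 : σ) (s w (c ux).2.2 : σ) := hw1
      rwa [hx1, hx2] at this
    · have : R (c uy).1 (s uy (c uy).2.1 : σ) (s w (c uy).2.2 : σ) := hw2
      rwa [hy1, hy2] at this
  · intro v
    obtain ⟨w, hvw, hw⟩ := hp v
    refine ⟨(s w (c w).2.1 : σ), ⟨w, hw, rfl⟩, ?_⟩
    rw [(s w (c w).2.1).2]
    exact hvw
end

section
/- Suppose κ is a strongly compact cardinal, Λ is a directed partial order with no maximal element whose directedness d_Λ is at least κ, and 𝒮 is a Λ-system with width(𝒮) < κ. Then 𝒮 has a cofinal branch. -/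
/-!
Statement 2: If κ is strongly compact, Λ is a directed partial order (no maximal
element) with d_Λ ≥ κ (i.e. Λ is κ-directed), and 𝒮 is a Λ-system of width < κ,
then 𝒮 has a cofinal branch.
-/

universe u

open Cardinal

/-- `F` is a `κ`-complete filter: closed under intersections of `< κ` members. -/
def IsKComplete {α : Type u} (κ : Cardinal.{u}) (F : Filter α) : Prop :=
  ∀ s : Set (Set α), #s < κ → (∀ t ∈ s, t ∈ F) → ⋂₀ s ∈ F

/-- `κ` is strongly compact: every `κ`-complete filter (on any set) extends to a
`κ`-complete ultrafilter. -/
def IsStronglyCompact (κ : Cardinal.{u}) : Prop :=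
  ∀ (α : Type u) (F : Filter α), F.NeBot → IsKComplete κ F →
    ∃ U : Ultrafilter α, (U : Filter α) ≤ F ∧ IsKComplete κ (U : Filter α)

theorem stmt2 {Λ : Type u} [PartialOrder Λ] (κ : Cardinal.{u})
    (hsc : IsStronglyCompact κ)
    (hnomax : ∀ u : Λ, ∃ v : Λ, u < v)
    (hdir : IsDir Λ κ) (hdir₀ : IsDir Λ ℵ₀)
    {σ ι : Type u} (ℓ : σ → Λ) (R : ι → σ → σ → Prop)
    (hsys : IsLSystem ℓ R) (hw : sysWidth ℓ R < κ) :
    HasCofBranch ℓ R := by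
  classical
  rcases isEmpty_or_nonempty Λ with hΛ | hΛ
  · exact ⟨hsys.idx_ne.some, ∅, fun x hx => absurd hx (Set.notMem_empty x),
      fun u => isEmptyElim u⟩
  -- witnesses from completeness
  have hcomp : ∀ u v : Λ, u < v → ∃ (i : ι) (x y : σ), ℓ x = u ∧ ℓ y = v ∧ R i x y :=
    fun u v h => hsys.complete h
  choose I X Y hX hY hR using hcomp
  -- the coding type
  have hμκ : (⨆ u : Λ, #{x : σ // ℓ x = u}) < κ :=
    lt_of_le_of_lt (le_max_left _ #ι) hw
  have hικ : #ι < κ := lt_of_le_of_lt (le_max_right (⨆ u : Λ, #{x : σ // ℓ x = u}) _) hw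
  obtain ⟨Mt, hMtcard⟩ : ∃ Mt : Type u, #Mt = ⨆ u : Λ, #{x : σ // ℓ x = u} :=
    ⟨(⨆ u : Λ, #{x : σ // ℓ x = u}).out, Cardinal.mk_out _⟩
  have hMtκ : #Mt < κ := by rw [hMtcard]; exact hμκ
  have hEex : ∀ u : Λ, Nonempty ({x : σ // ℓ x = u} ↪ Mt) := by
    intro u
    rw [← Cardinal.le_def, hMtcard]
    exact le_ciSup (Cardinal.bddAbove_range _) u
  have E : ∀ u : Λ, {x : σ // ℓ x = u} ↪ Mt := fun u => (hEex u).some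
  haveI : Nonempty ι := hsys.idx_ne
  obtain ⟨u₀⟩ := hΛ
  obtain ⟨x₀, hx₀⟩ := hsys.lvl_ne u₀
  haveI : Nonempty Mt := ⟨E u₀ ⟨x₀, hx₀⟩⟩
  -- the cone filter
  let F : Filter Λ :=
    { sets := {A | ∃ u : Λ, Set.Ici u ⊆ A}
      univ_sets := ⟨u₀, Set.subset_univ _⟩
      sets_of_superset := by rintro A B ⟨u, hu⟩ hAB; exact ⟨u, hu.trans hAB⟩
      inter_sets := by
        rintro A B ⟨a, ha⟩ ⟨b, hb⟩
        obtain ⟨w, hw2⟩ := hdir₀ {a, b} (((Set.finite_singleton b).insert a).lt_aleph0)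
        exact ⟨w, fun z hz =>
          ⟨ha (le_trans (hw2 a (by simp)) hz), hb (le_trans (hw2 b (by simp)) hz)⟩⟩ }
  have hmemF : ∀ {A : Set Λ}, (∃ u : Λ, Set.Ici u ⊆ A) → A ∈ F := fun h => h
  have hFne : F.NeBot := by
    apply Filter.forall_mem_nonempty_iff_neBot.mp
    intro s hs
    obtain ⟨u, hu⟩ := hs
    exact ⟨u, hu (le_refl u)⟩
  have hFcomp : IsKComplete κ F := by
    intro s hs hmem
    choose f hf using fun t : s => hmem t t.2
    obtain ⟨ub, hub⟩ := hdir (Set.range f) (lt_of_le_of_lt Cardinal.mk_range_le hs)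
    exact hmemF ⟨ub, fun z hz => Set.mem_sInter.mpr fun t ht =>
      hf ⟨t, ht⟩ (le_trans (hub _ ⟨⟨t, ht⟩, rfl⟩) hz)⟩
  obtain ⟨U, hUF, hUcomp⟩ := hsc Λ F hFne hFcomp
  have hIci : ∀ u : Λ, Set.Ici u ∈ U := fun u => hUF (hmemF ⟨u, subset_rfl⟩)
  have hIoi : ∀ u : Λ, Set.Ioi u ∈ U := by
    intro u
    obtain ⟨v, hv⟩ := hnomax u
    exact Filter.mem_of_superset (hIci v) (fun z hz => lt_of_lt_of_le hv hz)
  -- pigeonhole principle for the ultrafilter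
  have pigeon : ∀ {γ : Type u}, (#γ < κ ∨ Finite γ) → ∀ (g : Λ → γ) (A : Set Λ), A ∈ U →
      ∃ c : γ, {v : Λ | v ∈ A ∧ g v = c} ∈ U := by
    intro γ hγ g A hA
    by_contra hcon
    push_neg at hcon
    have hcompl : ∀ c : γ, {v : Λ | v ∈ A ∧ g v = c}ᶜ ∈ U :=
      fun c => Ultrafilter.compl_mem_iff_notMem.mpr (hcon c)
    have hint : (⋂ c : γ, {v : Λ | v ∈ A ∧ g v = c}ᶜ) ∈ U := by
      rcases hγ with h | h
      · have h2 := hUcomp (Set.range fun c : γ => {v : Λ | v ∈ A ∧ g v = c}ᶜ)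
          (lt_of_le_of_lt Cardinal.mk_range_le h) (by rintro t ⟨c, rfl⟩; exact hcompl c)
        rwa [Set.sInter_range] at h2
      · haveI := h
        exact Filter.iInter_mem.mpr hcompl
    obtain ⟨v, hv⟩ := Ultrafilter.nonempty_of_mem (Filter.inter_mem hA hint)
    exact (Set.mem_iInter.mp hv.2 (g v)) ⟨hv.1, rfl⟩
  -- the coloring
  obtain ⟨g1, hg1⟩ : ∃ g : Λ → Λ → ι × Mt × Mt, ∀ u v (h : u < v),
      g u v = (I u v h, E u ⟨X u v h, hX u v h⟩, E v ⟨Y u v h, hY u v h⟩) :=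
    ⟨fun u v => if h : u < v
        then (I u v h, E u ⟨X u v h, hX u v h⟩, E v ⟨Y u v h, hY u v h⟩)
        else Classical.arbitrary _,
     fun u v h => dif_pos h⟩
  have hCsmall : #(ι × Mt × Mt) < κ ∨ Finite (ι × Mt × Mt) := by
    rcases le_or_gt ℵ₀ κ with hκ | hκ
    · left
      have h := Cardinal.mul_lt_of_lt hκ hικ (Cardinal.mul_lt_of_lt hκ hMtκ hMtκ)
      simpa [Cardinal.mk_prod] using h
    · right
      haveI : Finite ι := Cardinal.lt_aleph0_iff_finite.mp (hικ.trans hκ)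
      haveI : Finite Mt := Cardinal.lt_aleph0_iff_finite.mp (hMtκ.trans hκ)
      infer_instance
  have hC2small : #(ι × Mt) < κ ∨ Finite (ι × Mt) := by
    rcases le_or_gt ℵ₀ κ with hκ | hκ
    · left
      have h := Cardinal.mul_lt_of_lt hκ hικ hMtκ
      simpa [Cardinal.mk_prod] using h
    · right
      haveI : Finite ι := Cardinal.lt_aleph0_iff_finite.mp (hικ.trans hκ)
      haveI : Finite Mt := Cardinal.lt_aleph0_iff_finite.mp (hMtκ.trans hκ)
      infer_instance
  -- stabilize the color above each u
  choose cu hcu using fun u : Λ => pigeon hCsmall (g1 u) (Set.Ioi u) (hIoi u)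
  have hAne : ∀ u : Λ, ∃ v, u < v ∧ g1 u v = cu u := by
    intro u
    obtain ⟨v, hv⟩ := Ultrafilter.nonempty_of_mem (hcu u)
    exact ⟨v, hv.1, hv.2⟩
  choose v₀ hlt₀ hg₀ using hAne
  -- extraction of the stable data
  have key : ∀ u v (hlt : u < v), g1 u v = cu u →
      ∃ (y : σ) (hy : ℓ y = v), E v ⟨y, hy⟩ = (cu u).2.2 ∧
        R (cu u).1 (X u (v₀ u) (hlt₀ u)) y := by
    intro u v hlt hg
    rw [hg1 u v hlt] at hg
    have hg' := (hg₀ u)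
    rw [hg1 u (v₀ u) (hlt₀ u)] at hg'
    have h1 : I u v hlt = (cu u).1 := by rw [← hg]
    have h2 : E u ⟨X u v hlt, hX u v hlt⟩ = (cu u).2.1 := by rw [← hg]
    have h2' : E u ⟨X u (v₀ u) (hlt₀ u), hX u (v₀ u) (hlt₀ u)⟩ = (cu u).2.1 := by rw [← hg']
    have h3 : E v ⟨Y u v hlt, hY u v hlt⟩ = (cu u).2.2 := by rw [← hg]
    have hXeq : X u v hlt = X u (v₀ u) (hlt₀ u) :=
      congrArg Subtype.val ((E u).injective (h2.trans h2'.symm))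
    refine ⟨Y u v hlt, hY u v hlt, h3, ?_⟩
    rw [← h1, ← hXeq]
    exact hR u v hlt
  -- find a cofinal color class
  have hcof : ∃ p : ι × Mt, ∀ w : Λ, ∃ u, w ≤ u ∧ ((cu u).1, (cu u).2.2) = p := by
    by_contra hcon
    push_neg at hcon
    choose wb hwb using hcon
    have hbound : ∃ ub : Λ, ∀ x ∈ Set.range wb, x ≤ ub := by
      rcases hC2small with h | h
      · exact hdir _ (lt_of_le_of_lt Cardinal.mk_range_le h)
      · haveI := h
        exact hdir₀ _ ((Set.finite_range wb).lt_aleph0)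
    obtain ⟨ub, hub⟩ := hbound
    exact hwb ((cu ub).1, (cu ub).2.2) ub (hub _ ⟨_, rfl⟩) rfl
  obtain ⟨⟨istar, ηstar⟩, hB⟩ := hcof
  refine ⟨istar, (fun u => X u (v₀ u) (hlt₀ u)) ''
    {u : Λ | (cu u).1 = istar ∧ (cu u).2.2 = ηstar}, ?_, ?_⟩
  · rintro x ⟨a, ⟨ha1, ha2⟩, rfl⟩ y ⟨b, ⟨hb1, hb2⟩, rfl⟩
    have hAB : ({v : Λ | v ∈ Set.Ioi a ∧ g1 a v = cu a} ∩
        {v : Λ | v ∈ Set.Ioi b ∧ g1 b v = cu b}) ∈ U :=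
      Filter.inter_mem (hcu a) (hcu b)
    obtain ⟨v, hva, hvb⟩ := Ultrafilter.nonempty_of_mem hAB
    obtain ⟨ya, hya, hca, hra⟩ := key a v hva.1 hva.2
    obtain ⟨yb, hyb, hcb, hrb⟩ := key b v hvb.1 hvb.2
    have hy : ya = yb := by
      have : (⟨ya, hya⟩ : {x : σ // ℓ x = v}) = ⟨yb, hyb⟩ :=
        (E v).injective (by rw [hca, hcb, ha2, hb2])
      exact congrArg Subtype.val this
    refine ⟨ya, Or.inl ?_, Or.inl ?_⟩
    · rw [← ha1]; exact hra
    · rw [← hb1, hy]; exact hrb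
  · intro u
    obtain ⟨a, hua, hpa⟩ := hB u
    refine ⟨X a (v₀ a) (hlt₀ a),
      ⟨a, ⟨congrArg Prod.fst hpa, congrArg Prod.snd hpa⟩, rfl⟩, ?_⟩
    rw [hX a (v₀ a) (hlt₀ a)]
    exact hua
end

section
/- Suppose Λ is a directed partial order and 𝒮 = ⟨⟨S_u : u ∈ Λ⟩, ℛ⟩ is a Λ-system. Then there is a Λ-system 𝒮′ = ⟨⟨S′_u : u ∈ Λ⟩, ℛ′⟩ such that ℛ′ consists of a single relation, width(𝒮′) = width(𝒮), and 𝒮′ has a cofinal branch if and only if 𝒮 has a cofinal branch. -/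
/-!
Statement 3: Every Λ-system 𝒮 admits a Λ-system 𝒮′ with a single relation, the
same width, and having a cofinal branch iff 𝒮 does.
-/

universe u

open Cardinal

/-- Pigeonhole for ultrafilters: a finitely-valued function is constant on a
set of the ultrafilter. -/
lemma ultra_pigeon {α β : Type*} [Finite β] (U : Ultrafilter α) {s : Set α}
    (hs : s ∈ U) (f : α → β) : ∃ b : β, {a | a ∈ s ∧ f a = b} ∈ U := by
  have hU : (⋃ b ∈ (Set.univ : Set β), {a | a ∈ s ∧ f a = b}) ∈ U := by
    have : s ⊆ ⋃ b ∈ (Set.univ : Set β), {a | a ∈ s ∧ f a = b} := by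
      intro a ha
      exact Set.mem_biUnion (Set.mem_univ (f a)) ⟨ha, rfl⟩
    exact Filter.mem_of_superset hs this
  obtain ⟨b, _, hb⟩ := (Ultrafilter.finite_biUnion_mem_iff Set.finite_univ).mp hU
  exact ⟨b, hb⟩

/-- The narrow system lemma: a system with finitely many relations and levels
uniformly embeddable in `Fin n` has a cofinal branch. -/
lemma narrow_lemma {Λ : Type u} [PartialOrder Λ]
    (hdir : IsDir Λ ℵ₀) (hnomax : ∀ u : Λ, ∃ v : Λ, u < v)
    {σ ι : Type u} (ℓ : σ → Λ) (R : ι → σ → σ → Prop)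
    (hsys : IsLSystem ℓ R) [Finite ι] (n : ℕ)
    (e : ∀ v : Λ, {x : σ // ℓ x = v} ↪ Fin n) :
    HasCofBranch ℓ R := by
  classical
  -- Λ is nonempty and directed, with no maximal element
  have hne : Nonempty Λ := by
    obtain ⟨ub, -⟩ := hdir ∅ (by simp [aleph0_pos])
    exact ⟨ub⟩
  have hdir2 : ∀ a b : Λ, ∃ c : Λ, a ≤ c ∧ b ≤ c := by
    intro a b
    obtain ⟨ub, hub⟩ := hdir {a, b} (((Set.finite_singleton b).insert a).lt_aleph0)
    exact ⟨ub, hub a (by simp), hub b (by simp)⟩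
  haveI : IsDirected Λ (· ≤ ·) := ⟨hdir2⟩
  haveI : NoMaxOrder Λ := ⟨fun a => hnomax a⟩
  haveI : Filter.NeBot (Filter.atTop : Filter Λ) := Filter.atTop_neBot
  set U : Ultrafilter Λ := Ultrafilter.of Filter.atTop with hUdef
  have hUle : (U : Filter Λ) ≤ Filter.atTop := Ultrafilter.of_le _
  have hIoi : ∀ u : Λ, Set.Ioi u ∈ U := fun u => hUle (Filter.Ioi_mem_atTop u)
  have hIci : ∀ u : Λ, Set.Ici u ∈ U := fun u => hUle (Filter.Ici_mem_atTop u)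
  -- nonemptiness of the colour spaces
  haveI : Nonempty ι := hsys.idx_ne
  haveI hlvl : ∀ u : Λ, Nonempty {x : σ // ℓ x = u} := fun u => by
    obtain ⟨x, hx⟩ := hsys.lvl_ne u; exact ⟨⟨x, hx⟩⟩
  haveI : Nonempty (Fin n) := by
    obtain ⟨x⟩ := hlvl (Classical.arbitrary Λ)
    exact ⟨e _ x⟩
  haveI : ∀ u : Λ, Finite {x : σ // ℓ x = u} := fun u =>
    Finite.of_injective (e u) (e u).injective
  -- witnesses from completeness
  have hw : ∀ u v : Λ, u < v → ∃ c : ι × {x : σ // ℓ x = u} × Fin n,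
      ∃ y : {x : σ // ℓ x = v}, e v y = c.2.2 ∧ R c.1 (c.2.1 : σ) (y : σ) := by
    intro u v huv
    obtain ⟨i, x, y, hx, hy, hr⟩ := hsys.complete huv
    exact ⟨⟨i, ⟨x, hx⟩, e v ⟨y, hy⟩⟩, ⟨y, hy⟩, rfl, hr⟩
  choose W hW using hw
  -- first pigeonhole, for each u
  have h1 : ∀ u : Λ, ∃ c : ι × {x : σ // ℓ x = u} × Fin n,
      {v | v ∈ Set.Ioi u ∧
        (if h : u < v then W u v h else Classical.arbitrary _) = c} ∈ U :=
    fun u => ultra_pigeon U (hIoi u) _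
  choose c hc using h1
  -- second pigeonhole over u
  obtain ⟨⟨istar, kstar⟩, hC⟩ :=
    ultra_pigeon U (U.univ_mem) (fun u : Λ => ((c u).1, (c u).2.2))
  set C : Set Λ := {a | a ∈ Set.univ ∧ ((c a).1, (c a).2.2) = (istar, kstar)} with hCdef
  -- key fact about members of C
  have key : ∀ u ∈ C, ∀ v ∈ {v | v ∈ Set.Ioi u ∧
        (if h : u < v then W u v h else Classical.arbitrary _) = c u},
      ∃ y : {x : σ // ℓ x = v}, e v y = kstar ∧ R istar ((c u).2.1 : σ) (y : σ) := by
    intro u hu v hv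
    obtain ⟨hv1, hv2⟩ := hv
    have hv1' : u < v := hv1
    rw [dif_pos hv1'] at hv2
    obtain ⟨y, hy1, hy2⟩ := hW u v hv1'
    rw [hv2] at hy1 hy2
    have hi : (c u).1 = istar := congrArg Prod.fst hu.2
    have hk : (c u).2.2 = kstar := congrArg Prod.snd hu.2
    rw [hi] at hy2; rw [hk] at hy1
    exact ⟨y, hy1, hy2⟩
  refine ⟨istar, {x : σ | ∃ u ∈ C, x = ((c u).2.1 : σ)}, ?_, ?_⟩
  · rintro x ⟨u, hu, rfl⟩ y ⟨u', hu', rfl⟩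
    have hmem := (U.inter_mem (hc u) (hc u'))
    obtain ⟨v, hv1, hv2⟩ := Ultrafilter.nonempty_of_mem hmem
    obtain ⟨z1, hz1e, hz1r⟩ := key u hu v hv1
    obtain ⟨z2, hz2e, hz2r⟩ := key u' hu' v hv2
    have : z1 = z2 := (e v).injective (by rw [hz1e, hz2e])
    subst this
    exact ⟨(z1 : σ), Or.inl hz1r, Or.inl hz2r⟩
  · intro w
    obtain ⟨u, huC, huw⟩ := Ultrafilter.nonempty_of_mem (U.inter_mem hC (hIci w))
    exact ⟨((c u).2.1 : σ), ⟨u, huC, rfl⟩, by rw [(c u).2.1.2]; exact huw⟩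

theorem stmt3 {Λ : Type u} [PartialOrder Λ]
    (hdir : IsDir Λ ℵ₀) (hnomax : ∀ u : Λ, ∃ v : Λ, u < v)
    {σ ι : Type u} (ℓ : σ → Λ) (R : ι → σ → σ → Prop)
    (hsys : IsLSystem ℓ R) :
    ∃ (σ' ι' : Type u) (ℓ' : σ' → Λ) (R' : ι' → σ' → σ' → Prop),
      IsLSystem ℓ' R' ∧ #ι' = 1 ∧ sysWidth ℓ' R' = sysWidth ℓ R ∧
      (HasCofBranch ℓ' R' ↔ HasCofBranch ℓ R) := by
  classical
  have hne : Nonempty Λ := by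
    obtain ⟨ub, -⟩ := hdir ∅ (by simp [aleph0_pos])
    exact ⟨ub⟩
  haveI := hne
  haveI : Nonempty ι := hsys.idx_ne
  have hdir2 : ∀ a b : Λ, ∃ c : Λ, a ≤ c ∧ b ≤ c := by
    intro a b
    obtain ⟨ub, hub⟩ := hdir {a, b} ((Set.finite_singleton b).insert a).lt_aleph0
    exact ⟨ub, hub a (by simp), hub b (by simp)⟩
  have hlvl : ∀ u : Λ, Nonempty {x : σ // ℓ x = u} := fun u => by
    obtain ⟨x, hx⟩ := hsys.lvl_ne u; exact ⟨⟨x, hx⟩⟩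
  have hlvl1 : ∀ u : Λ, (1 : Cardinal) ≤ #{x : σ // ℓ x = u} := fun u =>
    Cardinal.one_le_iff_ne_zero.mpr (mk_ne_zero_iff.mpr (hlvl u))
  set s : Cardinal := ⨆ u : Λ, #{x : σ // ℓ x = u} with hsdef
  have hbdd := Cardinal.bddAbove_range (fun u : Λ => #{x : σ // ℓ x = u})
  have hles : ∀ u : Λ, #{x : σ // ℓ x = u} ≤ s := fun u => le_ciSup hbdd u
  have hs1 : (1 : Cardinal) ≤ s := le_trans (hlvl1 (Classical.arbitrary Λ)) (hles _)
  have hwidth1 : (1 : Cardinal) ≤ sysWidth ℓ R := le_trans hs1 (le_max_left _ _)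
  by_cases hbr : HasCofBranch ℓ R
  · -- 𝒮 has a branch: use a trivial system of the right width.
    set F : Type u := (sysWidth ℓ R).out with hFdef
    have hF : #F = sysWidth ℓ R := mk_out _
    haveI : Nonempty F := mk_ne_zero_iff.mp (by rw [hF]; exact Cardinal.one_le_iff_ne_zero.mp hwidth1)
    set a0 : F := Classical.arbitrary F
    refine ⟨Λ × F, PUnit, Prod.fst, fun _ p q => p.1 < q.1 ∧ p.2 = q.2,
      ⟨?_, ⟨PUnit.unit⟩, ?_, ?_, ?_, ?_⟩, mk_punit, ?_, ?_⟩
    · intro u; exact ⟨(u, a0), rfl⟩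
    · rintro _ p q r ⟨h1, h2⟩ ⟨h3, h4⟩; exact ⟨h1.trans h3, h2.trans h4⟩
    · rintro _ p q ⟨h, -⟩; exact h
    · rintro _ x y z ⟨hxz, hxz2⟩ ⟨hyz, hyz2⟩ hxy
      rcases lt_or_eq_of_le hxy with h | h
      · exact Or.inl ⟨h, hxz2.trans hyz2.symm⟩
      · exact Or.inr (Prod.ext h (hxz2.trans hyz2.symm))
    · intro u v huv
      exact ⟨PUnit.unit, (u, a0), (v, a0), rfl, rfl, huv, rfl⟩
    · -- width
      have hequiv : ∀ u : Λ, #{p : Λ × F // p.1 = u} = #F := fun u =>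
        mk_congr ⟨fun p => p.1.2, fun a => ⟨(u, a), rfl⟩,
          by rintro ⟨⟨v, a⟩, rfl⟩; rfl, fun a => rfl⟩
      have hF' : #F = max (⨆ u : Λ, #{x : σ // ℓ x = u}) #ι := hF
      unfold sysWidth
      simp only [hequiv, ciSup_const, mk_punit, hF']
      exact max_eq_left (le_trans hs1 (le_max_left _ _))
    · constructor
      · intro _; exact hbr
      · intro _
        refine ⟨PUnit.unit, Set.range (fun u : Λ => ((u, a0) : Λ × F)), ?_, ?_⟩
        · rintro p ⟨u, rfl⟩ q ⟨v, rfl⟩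
          obtain ⟨t, ht1, ht2⟩ := hdir2 u v
          obtain ⟨t', ht'⟩ := hnomax t
          exact ⟨(t', a0), Or.inl ⟨lt_of_le_of_lt ht1 ht', rfl⟩,
            Or.inl ⟨lt_of_le_of_lt ht2 ht', rfl⟩⟩
        · intro u; exact ⟨(u, a0), ⟨u, rfl⟩, le_refl u⟩
  · -- 𝒮 has no branch: the width is infinite and the product construction works.
    have hinf : ℵ₀ ≤ max s #ι := by
      by_contra h
      push_neg at h
      have hsfin : s < ℵ₀ := lt_of_le_of_lt (le_max_left _ _) h
      have hifin : #ι < ℵ₀ := lt_of_le_of_lt (le_max_right _ _) h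
      haveI : Finite ι := lt_aleph0_iff_finite.mp hifin
      obtain ⟨n, hn⟩ := lt_aleph0.mp hsfin
      have he : ∀ v : Λ, Nonempty ({x : σ // ℓ x = v} ↪ ULift.{u} (Fin n)) := fun v =>
        (Cardinal.le_def _ _).mp (by
          simp only [Cardinal.mk_uLift, mk_fin, Cardinal.lift_natCast]
          exact hn ▸ hles v)
      exact hbr (narrow_lemma hdir hnomax ℓ R hsys n
        (fun v => (Classical.choice (he v)).trans Equiv.ulift.toEmbedding))
    refine ⟨σ × ι, PUnit, fun p => ℓ p.1, fun _ p q => p.2 = q.2 ∧ R q.2 p.1 q.1,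
      ⟨?_, ⟨PUnit.unit⟩, ?_, ?_, ?_, ?_⟩, mk_punit, ?_, ?_⟩
    · intro u
      obtain ⟨x, hx⟩ := hsys.lvl_ne u
      exact ⟨(x, Classical.arbitrary ι), hx⟩
    · rintro _ p q r ⟨h1, h2⟩ ⟨h3, h4⟩
      refine ⟨h1.trans h3, ?_⟩
      rw [h3] at h2
      exact hsys.trans r.2 h2 h4
    · rintro _ p q ⟨-, h⟩
      exact hsys.lt_lvl q.2 p.1 q.1 h
    · rintro _ x y z ⟨hx1, hx2⟩ ⟨hy1, hy2⟩ hxy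
      rcases hsys.treelike z.2 x.1 y.1 z.1 hx2 hy2 hxy with h | h
      · left
        refine ⟨hx1.trans hy1.symm, ?_⟩
        rw [← hy1] at h
        exact h
      · exact Or.inr (Prod.ext h (hx1.trans hy1.symm))
    · intro u v huv
      obtain ⟨i, x, y, hx, hy, hr⟩ := hsys.complete huv
      exact ⟨PUnit.unit, (x, i), (y, i), hx, hy, rfl, hr⟩
    · -- width
      have hequiv : ∀ u : Λ, #{p : σ × ι // ℓ p.1 = u} = #{x : σ // ℓ x = u} * #ι :=
        fun u => (mk_congr
          ⟨fun p => (⟨p.1.1, p.2⟩, p.1.2), fun q => ⟨(q.1.1, q.2), q.1.2⟩,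
            by rintro ⟨⟨x, i⟩, h⟩; rfl, by rintro ⟨⟨x, h⟩, i⟩; rfl⟩).trans
          (mul_def _ _).symm
      have hbdd2 := Cardinal.bddAbove_range (fun u : Λ => #{x : σ // ℓ x = u} * #ι)
      have hι1 : (1 : Cardinal) ≤ #ι :=
        Cardinal.one_le_iff_ne_zero.mpr (mk_ne_zero_iff.mpr ‹Nonempty ι›)
      have h1 : (⨆ u : Λ, #{x : σ // ℓ x = u} * #ι) ≤ max s #ι :=
        ciSup_le fun u => (mul_le_max _ _).trans
          (max_le (max_le ((hles u).trans (le_max_left _ _)) (le_max_right _ _)) hinf)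
      have h2 : s ≤ ⨆ u : Λ, #{x : σ // ℓ x = u} * #ι :=
        ciSup_mono hbdd2 fun u => le_mul_of_one_le_right zero_le hι1
      have h3 : #ι ≤ ⨆ u : Λ, #{x : σ // ℓ x = u} * #ι := by
        refine le_trans ?_ (le_ciSup hbdd2 (Classical.arbitrary Λ))
        calc #ι = 1 * #ι := (one_mul _).symm
          _ ≤ #{x : σ // ℓ x = Classical.arbitrary Λ} * #ι :=
            mul_le_mul_left (hlvl1 _) _
      rw [sysWidth, sysWidth]
      simp only [hequiv, mk_punit]
      rw [max_eq_left (hs1.trans h2), le_antisymm h1 (max_le h2 h3)]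
    · constructor
      · rintro ⟨i', b', hb', hcof'⟩
        obtain ⟨p0, hp0, -⟩ := hcof' (Classical.arbitrary Λ)
        have htag : ∀ p ∈ b', p.2 = p0.2 := by
          intro p hp
          obtain ⟨z, h1, h2⟩ := hb' p hp p0 hp0
          have e1 : p.2 = z.2 := by
            rcases h1 with ⟨h, -⟩ | rfl
            · exact h
            · rfl
          have e2 : p0.2 = z.2 := by
            rcases h2 with ⟨h, -⟩ | rfl
            · exact h
            · rfl
          rw [e1, e2]
        refine ⟨p0.2, {x : σ | (x, p0.2) ∈ b'}, ?_, ?_⟩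
        · intro x hx y hy
          obtain ⟨z, h1, h2⟩ := hb' (x, p0.2) hx (y, p0.2) hy
          refine ⟨z.1, ?_, ?_⟩
          · rcases h1 with ⟨ht, hr⟩ | rfl
            · rw [← ht] at hr
              exact Or.inl hr
            · exact Or.inr rfl
          · rcases h2 with ⟨ht, hr⟩ | rfl
            · rw [← ht] at hr
              exact Or.inl hr
            · exact Or.inr rfl
        · intro u
          obtain ⟨p, hp, hup⟩ := hcof' u
          have htp := htag p hp
          refine ⟨p.1, ?_, hup⟩
          show (p.1, p0.2) ∈ b'
          rw [← htp]
          exact hp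
      · rintro ⟨i, b, hb, hcof⟩
        refine ⟨PUnit.unit, {p : σ × ι | p.1 ∈ b ∧ p.2 = i}, ?_, ?_⟩
        · rintro p ⟨hp, hpt⟩ q ⟨hq, hqt⟩
          obtain ⟨z, h1, h2⟩ := hb p.1 hp q.1 hq
          refine ⟨(z, i), ?_, ?_⟩
          · rcases h1 with h | h
            · exact Or.inl ⟨hpt, h⟩
            · exact Or.inr (Prod.ext h hpt)
          · rcases h2 with h | h
            · exact Or.inl ⟨hqt, h⟩
            · exact Or.inr (Prod.ext h hqt)
        · intro u
          obtain ⟨x, hx, hux⟩ := hcof u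
          exact ⟨(x, i), ⟨hx, rfl⟩, hux⟩
end

section
/- Suppose Λ is a directed partial order with no maximal element, 𝒮 is a Λ-system with width(𝒮) = θ < d_Λ, and {b_i : i < θ} is a full set of branches in 𝒮 (each b_i is a branch, and for every u ∈ Λ there is i < θ with b_i ∩ S_u ≠ ∅). Then there is i < θ such that b_i is a cofinal branch in 𝒮. -/
/-!
Statement 4: If 𝒮 is a Λ-system with width(𝒮) = θ < d_Λ and {b_i : i < θ} is a
full set of branches in 𝒮, then some b_i is a cofinal branch in 𝒮.
-/

universe u

open Cardinal

/-- The directedness of `Λ`: the largest `κ` such that `Λ` is `κ`-directed. -/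
noncomputable def dirCard (Λ : Type u) [Preorder Λ] : Cardinal.{u} :=
  sSup {κ : Cardinal.{u} | IsDir Λ κ}

theorem stmt4 {Λ : Type u} [PartialOrder Λ]
    (hdir : IsDir Λ ℵ₀) (hnomax : ∀ u : Λ, ∃ v : Λ, u < v)
    {σ ι : Type u} (ℓ : σ → Λ) (R : ι → σ → σ → Prop)
    (hsys : IsLSystem ℓ R)
    (hθ : sysWidth ℓ R < dirCard Λ)
    (I : Type u) (hI : #I = sysWidth ℓ R)
    (b : I → Set σ) (Ri : I → ι)
    (hbr : ∀ i : I, IsSysBranch (R (Ri i)) (b i))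
    (hfull : ∀ u : Λ, ∃ (i : I), ∃ x ∈ b i, ℓ x = u) :
    ∃ i : I, IsSysBranch (R (Ri i)) (b i) ∧ ∀ u : Λ, ∃ x ∈ b i, u ≤ ℓ x := by
  by_contra h
  push_neg at h
  have h' : ∀ i : I, ∃ u : Λ, ∀ x ∈ b i, ¬ u ≤ ℓ x := fun i => h i (hbr i)
  choose u hu using h'
  have hne : {κ : Cardinal.{u} | IsDir Λ κ}.Nonempty := ⟨ℵ₀, hdir⟩
  obtain ⟨κ, hκ, hθκ⟩ := exists_lt_of_lt_csSup hne hθ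
  have hcard : #(Set.range u) < κ :=
    lt_of_le_of_lt (Cardinal.mk_range_le.trans_eq hI) hθκ
  obtain ⟨ub, hub⟩ := hκ (Set.range u) hcard
  obtain ⟨i, x, hx, hℓ⟩ := hfull ub
  exact hu i x hx (hℓ ▸ hub (u i) ⟨i, rfl⟩)
end

section
/- Suppose Λ is a directed partial order, θ is an infinite regular cardinal, and c : Λ^{[2]} → θ is a strongly unbounded subadditive function. Then there is a Λ-system of width θ with no cofinal branch. -/
/-!
Statement 5: If θ is an infinite regular cardinal and c : Λ^{[2]} → θ is a
strongly unbounded subadditive function on a directed partial order Λ, then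
there is a Λ-system of width θ with no cofinal branch.
-/

universe u

open Cardinal

/-- `c` is subadditive on pairs `u <_Λ v`. -/
def IsSubadditiveColoring {Λ : Type u} [Preorder Λ] (c : Λ → Λ → Ordinal.{u}) : Prop :=
  ∀ ⦃u v w : Λ⦄, u < v → v < w →
    c u w ≤ max (c u v) (c v w) ∧ c u v ≤ max (c u w) (c v w)

/-- `c : Λ^{[2]} → θ` is strongly unbounded: on every cofinal `Γ ⊆ Λ`, the image
of `Γ^{[2]}` under `c` is unbounded in `θ`. -/
def StronglyUnbounded {Λ : Type u} [Preorder Λ] (θ : Cardinal.{u})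
    (c : Λ → Λ → Ordinal.{u}) : Prop :=
  ∀ Γ : Set Λ, (∀ u : Λ, ∃ v ∈ Γ, u ≤ v) →
    ∀ i : Ordinal.{u}, i < θ.ord → ∃ u ∈ Γ, ∃ v ∈ Γ, u < v ∧ i ≤ c u v

theorem stmt5 {Λ : Type u} [PartialOrder Λ]
    (hdir : IsDir Λ ℵ₀) (hnomax : ∀ u : Λ, ∃ v : Λ, u < v)
    (θ : Cardinal.{u}) (hθreg : θ.IsRegular) (hθinf : ℵ₀ ≤ θ)
    (c : Λ → Λ → Ordinal.{u})
    (hrange : ∀ ⦃u v : Λ⦄, u < v → c u v < θ.ord)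
    (hsub : IsSubadditiveColoring c) (hunb : StronglyUnbounded θ c) :
    ∃ (σ ι : Type u) (ℓ : σ → Λ) (R : ι → σ → σ → Prop),
      IsLSystem ℓ R ∧ sysWidth ℓ R = θ ∧ ¬ HasCofBranch ℓ R := by
  obtain ⟨u₀, -⟩ := hdir ∅ (by simp [aleph0_pos])
  set T := θ.ord.ToType with hT
  have hTne : Nonempty T := by
    rw [hT, Ordinal.nonempty_toType_iff]
    exact (Cardinal.isSuccLimit_ord hθinf).pos.ne'
  set e := Ordinal.ToType.mk (o := θ.ord) with he
  -- the ordinal value of an element of T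
  let ov : T → Ordinal.{u} := fun i => (e.symm i : Ordinal)
  have hov : ∀ i, ov i < θ.ord := fun i => (e.symm i).2
  refine ⟨Λ × T, PUnit, Prod.fst,
    fun _ x y => x.1 < y.1 ∧ x.2 = y.2 ∧ c x.1 y.1 ≤ ov x.2, ?_, ?_, ?_⟩
  · constructor
    · intro u; exact ⟨⟨u, Classical.arbitrary T⟩, rfl⟩
    · exact ⟨PUnit.unit⟩
    · rintro i x y z ⟨h1, h2, h3⟩ ⟨h4, h5, h6⟩
      refine ⟨h1.trans h4, h2.trans h5, ?_⟩
      have := (hsub h1 h4).1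
      refine this.trans (max_le h3 ?_)
      rwa [← h2] at h6
    · rintro i x y ⟨h1, -, -⟩; exact h1
    · rintro i x y z ⟨h1, h2, h3⟩ ⟨h4, h5, h6⟩ hle
      rcases eq_or_lt_of_le hle with heq | hlt
      · right
        have : x.2 = y.2 := h2.trans h5.symm
        exact Prod.ext heq this
      · left
        refine ⟨hlt, h2.trans h5.symm, ?_⟩
        have := (hsub hlt h4).2
        refine this.trans (max_le h3 ?_)
        rw [show x.2 = y.2 from h2.trans h5.symm]; exact h6
    · intro u v huv
      refine ⟨PUnit.unit, ⟨u, e ⟨c u v, hrange huv⟩⟩, ⟨v, e ⟨c u v, hrange huv⟩⟩,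
        rfl, rfl, huv, rfl, ?_⟩
      simp [ov]
  · have hlev : ∀ u : Λ, #{x : Λ × T // x.1 = u} = θ := by
      intro u
      have : {x : Λ × T // x.1 = u} ≃ T :=
        ⟨fun x => x.1.2, fun i => ⟨⟨u, i⟩, rfl⟩, fun x => by
          rcases x with ⟨⟨a, b⟩, h⟩; cases h; rfl, fun i => rfl⟩
      rw [Cardinal.mk_congr this, hT, Cardinal.mk_toType, Cardinal.card_ord]
    haveI : Nonempty Λ := ⟨u₀⟩
    have h1 : (⨆ u : Λ, #{x : Λ × T // x.1 = u}) = θ := by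
      rw [show (fun u : Λ => #{x : Λ × T // x.1 = u}) = fun _ => θ from funext hlev]
      exact ciSup_const
    rw [sysWidth, h1, Cardinal.mk_punit]
    exact max_eq_left (one_le_aleph0.trans hθinf)
  · rintro ⟨i, b, hbr, hcof⟩
    -- all branch elements share the same second coordinate
    obtain ⟨x₀, hx₀, -⟩ := hcof u₀
    have hsame : ∀ x ∈ b, x.2 = x₀.2 := by
      intro x hx
      obtain ⟨z, hz1, hz2⟩ := hbr x hx x₀ hx₀
      have e1 : x.2 = z.2 := by rcases hz1 with ⟨-, h, -⟩ | rfl <;> [exact h; rfl]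
      have e2 : x₀.2 = z.2 := by rcases hz2 with ⟨-, h, -⟩ | rfl <;> [exact h; rfl]
      rw [e1, e2]
    set Γ : Set Λ := Prod.fst '' b with hΓ
    have hΓcof : ∀ u : Λ, ∃ v ∈ Γ, u ≤ v := by
      intro u
      obtain ⟨x, hx, hux⟩ := hcof u
      exact ⟨x.1, ⟨x, hx, rfl⟩, hux⟩
    have hsucc : ov x₀.2 + 1 < θ.ord := by
        rw [Ordinal.add_one_eq_succ]; exact (Cardinal.isSuccLimit_ord hθinf).succ_lt (hov _)
    obtain ⟨u, hu, v, hv, huv, hc⟩ := hunb Γ hΓcof (ov x₀.2 + 1) hsucc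
    obtain ⟨x, hxb, hx1⟩ := hu
    obtain ⟨y, hyb, hy1⟩ := hv
    have hx2 := hsame x hxb
    have hy2 := hsame y hyb
    have hclt : ov x₀.2 < c u v := lt_of_lt_of_le (lt_add_one _) hc
    subst hx1 hy1
    obtain ⟨z, hz1, hz2⟩ := hbr x hxb y hyb
    have key : c x.1 y.1 ≤ ov x₀.2 := by
      rcases hz1 with ⟨ha1, ha2, ha3⟩ | rfl
      · rcases hz2 with ⟨hb1, hb2, hb3⟩ | rfl
        · -- both below z
          have := (hsub huv hb1).2
          refine this.trans (max_le ?_ ?_)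
          · rw [← hx2]; exact ha3
          · rw [← hy2]; exact hb3
        · -- y = z, so x R y
          rw [← hx2]; exact ha3
      · rcases hz2 with ⟨hb1, -, -⟩ | rfl
        · exact absurd (huv.trans hb1) (lt_irrefl _)
        · exact absurd huv (lt_irrefl _)
    exact absurd key (not_le.mpr hclt)
end

section
/- Suppose Λ is a directed partial order such that every narrow Λ-system has a cofinal branch (NSP(Λ)). Then for every infinite regular cardinal θ with θ⁺ < d_Λ, there is no strongly unbounded subadditive coloring c : Λ^{[2]} → θ. -/
/-!
Statement 6: If NSP(Λ) holds (every narrow Λ-system has a cofinal branch), then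
for every infinite regular cardinal θ with θ⁺ < d_Λ there is no strongly
unbounded subadditive coloring c : Λ^{[2]} → θ.
-/

universe u

open Cardinal

theorem stmt6 {Λ : Type u} [PartialOrder Λ]
    (hdir : IsDir Λ ℵ₀) (hnomax : ∀ u : Λ, ∃ v : Λ, u < v)
    (hNSP : ∀ (σ ι : Type u) (ℓ : σ → Λ) (R : ι → σ → σ → Prop),
      IsLSystem ℓ R → Order.succ (sysWidth ℓ R) < dirCard Λ → HasCofBranch ℓ R)
    (θ : Cardinal.{u}) (hθreg : θ.IsRegular) (hθinf : ℵ₀ ≤ θ)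
    (hθd : Order.succ θ < dirCard Λ) :
    ¬ ∃ c : Λ → Λ → Ordinal.{u},
        (∀ ⦃u v : Λ⦄, u < v → c u v < θ.ord) ∧
        IsSubadditiveColoring c ∧ StronglyUnbounded θ c := by
  rintro ⟨c, hc, hsub, hunb⟩
  classical
  have hθ0 : θ.ord ≠ 0 := (Cardinal.isSuccLimit_ord hθinf).pos.ne'
  -- index = ordinals below θ.ord, encoded in toType
  let e := (Ordinal.ToType.mk : Set.Iio θ.ord ≃o θ.ord.ToType)
  let val : θ.ord.ToType → Ordinal.{u} := fun i => (e.symm i).1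
  have hval : ∀ i, val i < θ.ord := fun i => (e.symm i).2
  let R : θ.ord.ToType → Λ → Λ → Prop := fun i x y => x < y ∧ c x y ≤ val i
  have hsys : IsLSystem (id : Λ → Λ) R := by
    constructor
    · exact fun u => ⟨u, rfl⟩
    · exact Ordinal.nonempty_toType_iff.2 hθ0
    · rintro i x y z ⟨hxy, hcxy⟩ ⟨hyz, hcyz⟩
      exact ⟨hxy.trans hyz, ((hsub hxy hyz).1).trans (max_le hcxy hcyz)⟩
    · exact fun i x y h => h.1
    · rintro i x y z ⟨hxz, hcxz⟩ ⟨hyz, hcyz⟩ hxy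
      rcases eq_or_lt_of_le (hxy : x ≤ y) with h | h
      · exact Or.inr h
      · exact Or.inl ⟨h, ((hsub h hyz).2).trans (max_le hcxz hcyz)⟩
    · intro u v huv
      refine ⟨e ⟨c u v, hc huv⟩, u, v, rfl, rfl, huv, ?_⟩
      simp only [val, OrderIso.symm_apply_apply]
      exact le_refl _
  have hwidth : sysWidth (id : Λ → Λ) R = θ := by
    unfold sysWidth
    have h1 : #θ.ord.ToType = θ := by
      rw [Cardinal.mk_toType, Cardinal.card_ord]
    rw [h1]
    refine max_eq_right ?_
    refine ciSup_le' fun u => ?_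
    have : #{x : Λ // (id x : Λ) = u} ≤ 1 := by
      refine Cardinal.mk_le_one_iff_set_subsingleton.2 ?_
      intro a ha b hb
      simp only [Set.mem_setOf_eq, id] at ha hb
      exact ha.trans hb.symm
    exact this.trans (Cardinal.one_le_aleph0.trans hθinf)
  have hbr := hNSP Λ θ.ord.ToType (id : Λ → Λ) R hsys (by rw [hwidth]; exact hθd)
  obtain ⟨i, b, hbranch, hcof⟩ := hbr
  have hcof' : ∀ u : Λ, ∃ v ∈ b, u ≤ v := by
    intro u; obtain ⟨x, hx, hux⟩ := hcof u; exact ⟨x, hx, hux⟩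
  -- all pairs in b have color ≤ val i
  have hbdd : ∀ u ∈ b, ∀ v ∈ b, u < v → c u v ≤ val i := by
    intro u hu v hv huv
    obtain ⟨z, hz1, hz2⟩ := hbranch u hu v hv
    rcases hz2 with ⟨hvz, hcvz⟩ | rfl
    · rcases hz1 with ⟨huz, hcuz⟩ | rfl
      · exact ((hsub huv hvz).2).trans (max_le hcuz hcvz)
      · exact absurd (huv.trans hvz) (lt_irrefl u)
    · rcases hz1 with ⟨_, hcuz⟩ | rfl
      · exact hcuz
      · exact absurd huv (lt_irrefl u)
  have hsucc : val i + 1 < θ.ord := by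
    rw [Ordinal.add_one_eq_succ]; exact (Cardinal.isSuccLimit_ord hθinf).succ_lt (hval i)
  obtain ⟨u, hu, v, hv, huv, hle⟩ := hunb b hcof' (val i + 1) hsucc
  have := (Order.add_one_le_iff.mp hle)
  exact absurd (hbdd u hu v hv huv) (not_le_of_gt this)
end

section
/- With notation as in the previous statement (x_j := x ∩ D(j,γ_x), and c(x,y) defined for x ⊊ y in 𝒫_κ λ as the least i < θ such that x_j = y_j ∩ x for all j ∈ [i,θ)), the coloring c : (𝒫_κ λ)^{[2]} → θ is subadditive: for x ⊊ y ⊊ z in 𝒫_κ λ, c(x,z) ≤ max(c(x,y), c(y,z)) and c(x,y) ≤ max(c(x,z), c(y,z)). -/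
/-!
Statement 8: With x_j := x ∩ D(j, γ_x) and c(x,y) the least i < θ such that
x_j = y_j ∩ x for all j ∈ [i, θ), the coloring c : (𝒫_κ λ)^{[2]} → θ is
subadditive.
-/

open Cardinal

/-- `𝒫_κ λ`: subsets of `λ` (ordinals `< L`) of cardinality `< κ`. -/
def Pk (κ : Cardinal.{0}) (L : Ordinal.{0}) : Set (Set Ordinal.{0}) :=
  {x | (∀ α ∈ x, α < L) ∧ #x < Cardinal.lift.{1} κ}

/-- The supremum of a set of ordinals. -/
noncomputable def supS (x : Set Ordinal.{0}) : Ordinal.{0} := sSup x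

/-- The strong supremum `ssup(x) = sup {α + 1 : α ∈ x}` of a set of ordinals. -/
noncomputable def ssupS (x : Set Ordinal.{0}) : Ordinal.{0} :=
  sSup (Order.succ '' x)

/-- A `θ`-covering matrix for `L`: `D i β` for `i < θ.ord`, `β < L`, each column
`⊆`-increasing with union `β`, and coherent upwards. -/
structure CovMatrix (θ : Cardinal.{0}) (L : Ordinal.{0}) where
  D : Ordinal.{0} → Ordinal.{0} → Set Ordinal.{0}
  mono : ∀ ⦃i j β : Ordinal.{0}⦄, i ≤ j → j < θ.ord → β < L → D i β ⊆ D j β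
  union : ∀ β : Ordinal.{0}, β < L → (⋃ i ∈ Set.Iio θ.ord, D i β) = Set.Iio β
  upcoh : ∀ ⦃β γ : Ordinal.{0}⦄, β < γ → γ < L →
    ∀ i : Ordinal.{0}, i < θ.ord → ∃ j : Ordinal.{0}, j < θ.ord ∧ D i β ⊆ D j γ

namespace CovMatrix

variable {θ : Cardinal.{0}} {L : Ordinal.{0}}

/-- `𝒟` is transitive: `β ∈ D(i,γ)` implies `D(i,β) ⊆ D(i,γ)`. -/
def IsTransitive (M : CovMatrix θ L) : Prop :=
  ∀ i : Ordinal.{0}, i < θ.ord → ∀ β γ : Ordinal.{0}, γ < L →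
    β ∈ M.D i γ → M.D i β ⊆ M.D i γ

/-- `C` is club in `β`: bounded by `β`, unbounded in `β`, and closed below `β`. -/
def IsClubIn (C : Set Ordinal.{0}) (β : Ordinal.{0}) : Prop :=
  (∀ α ∈ C, α < β) ∧ (∀ α : Ordinal.{0}, α < β → ∃ γ ∈ C, α ≤ γ) ∧
  (∀ α : Ordinal.{0}, α < β → 0 < α →
    (∀ γ : Ordinal.{0}, γ < α → ∃ δ ∈ C, γ < δ ∧ δ < α) → α ∈ C)

/-- `𝒟` is uniform: every limit `β < L` has some `D(i,β)` containing a club. -/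
def IsUniform (M : CovMatrix θ L) : Prop :=
  ∀ β : Ordinal.{0}, β < L → Order.IsSuccLimit β →
    ∃ i : Ordinal.{0}, i < θ.ord ∧ ∃ C : Set Ordinal.{0}, C ⊆ M.D i β ∧ IsClubIn C β

/-- `CP(𝒟)`: there is an unbounded `A ⊆ L` every `θ`-sized subset of which is
covered by some entry of `𝒟`. -/
def CP (M : CovMatrix θ L) : Prop :=
  ∃ A : Set Ordinal.{0}, (∀ α ∈ A, α < L) ∧
    (∀ α : Ordinal.{0}, α < L → ∃ β ∈ A, α ≤ β) ∧
    ∀ X : Set Ordinal.{0}, X ⊆ A → #X = Cardinal.lift.{1} θ →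
      ∃ i : Ordinal.{0}, i < θ.ord ∧ ∃ β : Ordinal.{0}, β < L ∧ X ⊆ M.D i β

end CovMatrix

/-- A concrete `𝒫_κ λ`-system. -/
structure ConcreteSystem (κ : Cardinal.{0}) (L : Ordinal.{0}) where
  A : Set (Set Ordinal.{0})
  hA : A ⊆ Pk κ L
  cofinal : ∀ x ∈ Pk κ L, ∃ y ∈ A, x ⊆ y
  S : Set Ordinal.{0} → Set (Set Ordinal.{0})
  S_ne : ∀ x ∈ A, (S x).Nonempty
  S_sub : ∀ x ∈ A, ∀ t ∈ S x, t ⊆ x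
  coh : ∀ x ∈ A, ∀ y ∈ A, x ⊆ y → ∃ t ∈ S y, t ∩ x ∈ S x

namespace ConcreteSystem

variable {κ : Cardinal.{0}} {L : Ordinal.{0}}

/-- The width of a concrete system: `sup {|S_x| : x ∈ A}`. -/
noncomputable def width (𝒮 : ConcreteSystem κ L) : Cardinal.{1} :=
  ⨆ x : 𝒮.A, #(𝒮.S x)

/-- `b ⊆ λ` is a cofinal branch: `{x ∈ A : b ∩ x ∈ S_x}` is `⊆`-cofinal. -/
def CofBranch (𝒮 : ConcreteSystem κ L) (b : Set Ordinal.{0}) : Prop :=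
  (∀ β ∈ b, β < L) ∧ ∀ x ∈ Pk κ L, ∃ y ∈ 𝒮.A, x ⊆ y ∧ b ∩ y ∈ 𝒮.S y

end ConcreteSystem

theorem stmt8 (μ θ κ : Cardinal.{0}) (L : Ordinal.{0})
    (hθ : θ = (μ.ord).cof) (hμinf : ℵ₀ ≤ μ) (hsing : θ < μ)
    (hκreg : κ.IsRegular) (hκunc : ℵ₀ < κ)
    (hθκ : Order.succ θ < κ) (hκμ : κ < μ)
    (hL : L = (Order.succ μ).ord)
    (M : CovMatrix θ L)
    (γ : Set Ordinal.{0} → Ordinal.{0})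
    (hγ : ∀ x ∈ Pk κ L, γ x < L ∧ ∀ β : Ordinal.{0}, γ x ≤ β → β < L →
      ∃ i : Ordinal.{0}, i < θ.ord ∧ ∀ j : Ordinal.{0}, i ≤ j → j < θ.ord →
        x ∩ M.D j β = x ∩ M.D j (γ x))
    (c : Set Ordinal.{0} → Set Ordinal.{0} → Ordinal.{0})
    -- c(x,y) is the least i < θ with x_j = y_j ∩ x for all j ∈ [i, θ):
    (hc : ∀ x ∈ Pk κ L, ∀ y ∈ Pk κ L, x ⊂ y →
      c x y < θ.ord ∧
      (∀ j : Ordinal.{0}, c x y ≤ j → j < θ.ord →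
        x ∩ M.D j (γ x) = (y ∩ M.D j (γ y)) ∩ x) ∧
      ∀ i : Ordinal.{0}, i < c x y →
        ¬ (∀ j : Ordinal.{0}, i ≤ j → j < θ.ord →
            x ∩ M.D j (γ x) = (y ∩ M.D j (γ y)) ∩ x)) :
    ∀ x ∈ Pk κ L, ∀ y ∈ Pk κ L, ∀ z ∈ Pk κ L, x ⊂ y → y ⊂ z →
      c x z ≤ max (c x y) (c y z) ∧ c x y ≤ max (c x z) (c y z) := by
  intro x hx y hy z hz hxy hyz
  have hxz : x ⊂ z := hxy.trans hyz
  obtain ⟨hcxy, hxy2, hxy3⟩ := hc x hx y hy hxy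
  obtain ⟨hcyz, hyz2, hyz3⟩ := hc y hy z hz hyz
  obtain ⟨hcxz, hxz2, hxz3⟩ := hc x hx z hz hxz
  have hyx : y ∩ x = x := Set.inter_eq_right.mpr hxy.subset
  have key1 : ∀ j : Ordinal.{0}, max (c x y) (c y z) ≤ j → j < θ.ord →
      x ∩ M.D j (γ x) = (z ∩ M.D j (γ z)) ∩ x := by
    intro j hj hjθ
    rw [hxy2 j (le_trans (le_max_left _ _) hj) hjθ,
        hyz2 j (le_trans (le_max_right _ _) hj) hjθ,
        Set.inter_assoc, hyx]
  have key2 : ∀ j : Ordinal.{0}, max (c x z) (c y z) ≤ j → j < θ.ord →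
      x ∩ M.D j (γ x) = (y ∩ M.D j (γ y)) ∩ x := by
    intro j hj hjθ
    rw [hxz2 j (le_trans (le_max_left _ _) hj) hjθ,
        hyz2 j (le_trans (le_max_right _ _) hj) hjθ,
        Set.inter_assoc (z ∩ M.D j (γ z)) y x, hyx]
  constructor
  · by_contra h
    exact hxz3 _ (lt_of_not_ge h) key1
  · by_contra h
    exact hxy3 _ (lt_of_not_ge h) key2
end

section
/- Suppose μ is a singular cardinal of cofinality θ, ⟨μᵢ : i < θ⟩ is an increasing sequence of regular cardinals converging to μ with μ₀ strongly compact and μ₀ > θ, Λ is a μ⁺-directed partial order with no maximal element, and 𝒯 is a Λ-tree with |T_u| ≤ μ for all u ∈ Λ. If 𝒯 admits a narrow subsystem as in the Magidor–Shelah claim — that is, there is a cofinal Γ ⊆ Λ and nonempty S_u ⊆ T_u for u ∈ Γ such that ⟨⟨S_u : u ∈ Γ⟩, {<_𝒯↾⋃S_u}⟩ is a Γ-system with width less than some strongly compact cardinal μᵢ — then 𝒯 has a cofinal branch. -/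
/-!
Statement 13: If μ is a singular limit of an increasing sequence ⟨μᵢ : i < θ⟩ of
regular cardinals with μ₀ strongly compact and μ₀ > θ = cf(μ), Λ is a
μ⁺-directed partial order with no maximal element, 𝒯 is a Λ-tree with levels of
size ≤ μ, and 𝒯 admits a narrow cofinal subsystem of width less than some
strongly compact μᵢ, then 𝒯 has a cofinal branch.
-/

universe u

open Cardinal

/-- `𝒯 = (⟨T_u : u ∈ Λ⟩, <_𝒯)` is a `Λ`-tree, where `T_u = ℓ ⁻¹' {u}`. -/
structure IsLTree {Λ : Type u} [Preorder Λ] {τ : Type u}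
    (ℓ : τ → Λ) (tlt : τ → τ → Prop) : Prop where
  lvl_ne : ∀ u : Λ, ∃ t : τ, ℓ t = u
  trans : Transitive tlt
  lt_lvl : ∀ x y : τ, tlt x y → ℓ x < ℓ y
  treelike : ∀ x y z : τ, tlt x z → tlt y z → ℓ x < ℓ y → tlt x y
  restrict : ∀ (u : Λ) (t : τ), u ≤ ℓ t → ∃! s : τ, ℓ s = u ∧ (tlt s t ∨ s = t)

section Aux
variable {Λ : Type u} [PartialOrder Λ] {τ : Type u} {ℓT : τ → Λ} {tlt : τ → τ → Prop}

open Classical in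
noncomputable def rest (htree : IsLTree ℓT tlt) (u : Λ) (t : τ) : τ :=
  if h : u ≤ ℓT t then (htree.restrict u t h).exists.choose else t

lemma rest_prop (htree : IsLTree ℓT tlt) {u : Λ} {t : τ} (h : u ≤ ℓT t) :
    ℓT (rest htree u t) = u ∧ (tlt (rest htree u t) t ∨ rest htree u t = t) := by
  unfold rest
  classical
  rw [dif_pos h]
  exact (htree.restrict u t h).exists.choose_spec

lemma rest_eq (htree : IsLTree ℓT tlt) {u : Λ} {t s : τ} (h : u ≤ ℓT t)
    (h1 : ℓT s = u) (h2 : tlt s t ∨ s = t) : rest htree u t = s :=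
  (htree.restrict u t h).unique (rest_prop htree h) ⟨h1, h2⟩

lemma rest_rest (htree : IsLTree ℓT tlt) {u u' : Λ} {t : τ} (h1 : u ≤ u') (h2 : u' ≤ ℓT t) :
    rest htree u (rest htree u' t) = rest htree u t := by
  have h : u ≤ ℓT t := h1.trans h2
  obtain ⟨l', r'⟩ := rest_prop htree h2
  obtain ⟨l, r⟩ := rest_prop htree h
  have hle : u ≤ ℓT (rest htree u' t) := by rw [l']; exact h1
  apply rest_eq htree hle l
  rcases r' with hr' | hr'
  · rcases r with hr | hr
    · rcases lt_or_eq_of_le h1 with hlt | heq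
      · left
        exact htree.treelike _ _ _ hr hr' (by rw [l, l']; exact hlt)
      · right
        subst heq
        exact (htree.restrict u t h).unique ⟨l, Or.inl hr⟩ ⟨l', Or.inl hr'⟩
    · exfalso
      have h3 : ℓT (rest htree u' t) < ℓT t := htree.lt_lvl _ _ hr'
      rw [l'] at h3
      rw [← hr, l] at h3
      exact absurd h1 (not_le_of_gt h3)
  · rw [hr']; exact r

end Aux

lemma exists_const_of_kcomplete {α β : Type u} (κ : Cardinal.{u}) {U : Ultrafilter α}
    (hU : IsKComplete κ (U : Filter α)) (f : α → β) (S : Set β) (hS : #S < κ)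
    (hdom : {a | f a ∈ S} ∈ U) : ∃ b ∈ S, {a | f a = b} ∈ U := by
  by_contra hc
  push_neg at hc
  have h1 : ∀ b : S, {a | f a = (b : β)}ᶜ ∈ U := fun b =>
    Ultrafilter.compl_mem_iff_notMem.mpr (hc b b.2)
  set s : Set (Set α) := Set.range (fun b : S => {a | f a = (b : β)}ᶜ) with hs_def
  have hs : #s < κ := lt_of_le_of_lt Cardinal.mk_range_le hS
  have hI : ⋂₀ s ∈ U := hU s hs (by rintro t ⟨b, rfl⟩; exact h1 b)
  have h2 : (⋂₀ s) ∩ {a | f a ∈ S} ∈ U := Filter.inter_mem hI hdom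
  obtain ⟨a, ha1, ha2⟩ := Ultrafilter.nonempty_of_mem h2
  exact (ha1 _ ⟨⟨f a, ha2⟩, rfl⟩) rfl

def cosmallFilter {α : Type u} (κ : Cardinal.{u}) (hreg : κ.IsRegular) : Filter α where
  sets := {s | #(↥sᶜ) < κ}
  univ_sets := by
    simp only [Set.mem_setOf_eq, Set.compl_univ, Cardinal.mk_emptyCollection]
    exact hreg.pos
  sets_of_superset := fun hs hsub => lt_of_le_of_lt
    (Cardinal.mk_le_mk_of_subset (Set.compl_subset_compl.mpr hsub)) hs
  inter_sets := fun {s t} hs ht => by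
    simp only [Set.mem_setOf_eq, Set.compl_inter]
    exact lt_of_le_of_lt (Cardinal.mk_union_le _ _)
      (Cardinal.add_lt_of_lt hreg.aleph0_le hs ht)

lemma two_power_lt_of_sc {κ : Cardinal.{u}} (hsc : IsStronglyCompact κ) (hreg : κ.IsRegular)
    {lam : Cardinal.{u}} (h : lam < κ) : 2 ^ lam < κ := by
  by_contra hc
  push_neg at hc
  set K := κ.ord.ToType with hK_def
  have hK : #K = κ := by rw [Cardinal.mk_toType, Cardinal.card_ord]
  set F : Filter K := cosmallFilter κ hreg with hF_def
  have hmemF : ∀ s : Set K, s ∈ F ↔ #(↥sᶜ) < κ := fun s => Iff.rfl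
  have hFc : IsKComplete κ F := by
    intro s hs hmem
    rw [hmemF, Set.compl_sInter]
    refine lt_of_le_of_lt (Cardinal.mk_sUnion_le _) ?_
    refine Cardinal.mul_lt_of_lt hreg.aleph0_le
      (lt_of_le_of_lt Cardinal.mk_image_le hs) ?_
    refine Cardinal.iSup_lt_of_isRegular hreg (lt_of_le_of_lt Cardinal.mk_image_le hs) ?_
    rintro ⟨t, r, hr, rfl⟩
    exact hmem r hr
  have hFne : F.NeBot := by
    refine Filter.forall_mem_nonempty_iff_neBot.mp ?_
    intro s hsF
    rcases Set.eq_empty_or_nonempty s with rfl | hne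
    · rw [hmemF, Set.compl_empty, Cardinal.mk_univ, hK] at hsF
      exact absurd hsF (lt_irrefl κ)
    · exact hne
  obtain ⟨U, hUF, hUc⟩ := hsc K F hFne hFc
  have hcosing : ∀ a : K, {a}ᶜ ∈ U := by
    intro a
    apply hUF
    rw [hmemF, compl_compl, Cardinal.mk_singleton]
    exact lt_of_lt_of_le Cardinal.one_lt_aleph0 hreg.aleph0_le
  set L := lam.ord.ToType with hL_def
  have hL : #L = lam := by rw [Cardinal.mk_toType, Cardinal.card_ord]
  have hinj : Nonempty (K ↪ Set L) := by
    refine (Cardinal.le_def K (Set L)).mp ?_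
    rw [hK, Cardinal.mk_set, hL]
    exact hc
  obtain ⟨f⟩ := hinj
  set B : L → Set K := fun x => {a | x ∈ f a ↔ ({a' | x ∈ f a'} ∈ U)} with hB_def
  have hB : ∀ x, B x ∈ U := by
    intro x
    by_cases hx : {a' | x ∈ f a'} ∈ U
    · refine Filter.mem_of_superset hx ?_
      intro a ha
      simp only [B, Set.mem_setOf_eq] at ha ⊢
      exact ⟨fun _ => hx, fun _ => ha⟩
    · refine Filter.mem_of_superset (Ultrafilter.compl_mem_iff_notMem.mpr hx) ?_
      intro a ha
      simp only [Set.mem_compl_iff, Set.mem_setOf_eq] at ha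
      simp only [B, Set.mem_setOf_eq]
      exact ⟨fun h => absurd h ha, fun h => absurd h hx⟩
  have hsB : #(Set.range B) < κ := lt_of_le_of_lt Cardinal.mk_range_le (by rw [hL]; exact h)
  have hIB : ⋂₀ (Set.range B) ∈ U := hUc _ hsB (by rintro t ⟨x, rfl⟩; exact hB x)
  have hsub : ∀ a ∈ ⋂₀ (Set.range B), ∀ a' ∈ ⋂₀ (Set.range B), a = a' := by
    intro a ha a' ha'
    apply f.injective
    ext x
    have h1 := ha (B x) ⟨x, rfl⟩
    have h2 := ha' (B x) ⟨x, rfl⟩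
    simp only [B, Set.mem_setOf_eq] at h1 h2
    exact h1.trans h2.symm
  obtain ⟨a, ha⟩ := Ultrafilter.nonempty_of_mem hIB
  have h3 : (⋂₀ (Set.range B)) ∩ {a}ᶜ ∈ U := Filter.inter_mem hIB (hcosing a)
  obtain ⟨a', ha'1, ha'2⟩ := Ultrafilter.nonempty_of_mem h3
  exact ha'2 (Set.mem_singleton_iff.mpr (hsub a' ha'1 a ha))

def coneFilter {Λ : Type u} [PartialOrder Λ] (Γ : Set Λ) (hne : Nonempty Λ)
    (hdir2 : ∀ w1 w2 : Λ, ∃ w, w1 ≤ w ∧ w2 ≤ w) : Filter ↥Γ where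
  sets := {A | ∃ w : Λ, ∀ v : ↥Γ, w ≤ ↑v → v ∈ A}
  univ_sets := ⟨hne.some, fun _ _ => trivial⟩
  sets_of_superset := fun ⟨w, hw⟩ hsub => ⟨w, fun v hv => hsub (hw v hv)⟩
  inter_sets := fun {s t} ⟨w1, h1⟩ ⟨w2, h2⟩ => by
    obtain ⟨w, hw1, hw2⟩ := hdir2 w1 w2
    exact ⟨w, fun v hv => ⟨h1 v (hw1.trans hv), h2 v (hw2.trans hv)⟩⟩

lemma mem_coneFilter {Λ : Type u} [PartialOrder Λ] {Γ : Set Λ} {hne : Nonempty Λ}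
    {hdir2 : ∀ w1 w2 : Λ, ∃ w, w1 ≤ w ∧ w2 ≤ w} {A : Set ↥Γ} :
    A ∈ coneFilter Γ hne hdir2 ↔ ∃ w : Λ, ∀ v : ↥Γ, w ≤ ↑v → v ∈ A := Iff.rfl


theorem stmt13 {Λ : Type u} [PartialOrder Λ]
    (μ θ : Cardinal.{u}) (hθ : θ = (μ.ord).cof) (hμinf : ℵ₀ ≤ μ) (hsing : θ < μ)
    (μs : Ordinal.{u} → Cardinal.{u})
    (hμs_mono : ∀ ⦃i j : Ordinal.{u}⦄, i < j → j < θ.ord → μs i < μs j)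
    (hμs_reg : ∀ i : Ordinal.{u}, i < θ.ord → (μs i).IsRegular)
    (hμs_lt : ∀ i : Ordinal.{u}, i < θ.ord → μs i < μ)
    (hμs_conv : ∀ ν : Cardinal.{u}, ν < μ → ∃ i : Ordinal.{u}, i < θ.ord ∧ ν ≤ μs i)
    (hsc₀ : IsStronglyCompact (μs 0)) (hθμ₀ : θ < μs 0)
    (hnomax : ∀ u : Λ, ∃ v : Λ, u < v)
    (hdir : IsDir Λ (Order.succ μ))
    {τ : Type u} (ℓT : τ → Λ) (tlt : τ → τ → Prop)
    (htree : IsLTree ℓT tlt)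
    (hlvl : ∀ u : Λ, #{t : τ // ℓT t = u} ≤ μ)
    -- 𝒯 admits a narrow cofinal subsystem of width < some strongly compact μᵢ:
    (hsub : ∃ Γ : Set Λ, (∀ u : Λ, ∃ v ∈ Γ, u ≤ v) ∧
      ∃ SS : Set τ,
        (∀ t ∈ SS, ℓT t ∈ Γ) ∧
        (∀ u ∈ Γ, ∃ t ∈ SS, ℓT t = u) ∧
        (∀ u ∈ Γ, ∀ v ∈ Γ, u < v →
          ∃ t ∈ SS, ∃ s ∈ SS, ℓT t = u ∧ ℓT s = v ∧ tlt t s) ∧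
        ∃ i : Ordinal.{u}, i < θ.ord ∧ IsStronglyCompact (μs i) ∧
          (⨆ u : Γ, #{t : τ // t ∈ SS ∧ ℓT t = (u : Λ)}) < μs i) :
    ∃ b : Λ → τ, (∀ u : Λ, ℓT (b u) = u) ∧
      ∀ ⦃u v : Λ⦄, u < v → tlt (b u) (b v) := by
  classical
  rcases isEmpty_or_nonempty Λ with hemp | hne
  · exact ⟨fun u => isEmptyElim u, fun u => isEmptyElim u, fun u v h => isEmptyElim u⟩
  obtain ⟨Γ, hΓ, SS, _hSSlvl, _hSSne, hpair, i, hi, hsc, hW⟩ := hsub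
  set G := ↥Γ with hG_def
  set W : Cardinal.{u} := ⨆ u : Γ, #{t : τ // t ∈ SS ∧ ℓT t = (u : Λ)} with hW_def
  set κ : Cardinal.{u} := μs i with hκ_def
  have hκreg : κ.IsRegular := hμs_reg i hi
  have hκμ : κ < μ := hμs_lt i hi
  have hlev : ∀ u : G, #{t : τ // t ∈ SS ∧ ℓT t = (u : Λ)} ≤ W := fun u =>
    le_ciSup (Cardinal.bddAbove_range _) u
  have hdir2 : ∀ w1 w2 : Λ, ∃ w, w1 ≤ w ∧ w2 ≤ w := by
    intro w1 w2
    obtain ⟨ub, hub⟩ := hdir {w1, w2} (by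
      refine lt_of_le_of_lt (Cardinal.mk_insert_le ..) ?_
      rw [Cardinal.mk_singleton]
      refine lt_of_le_of_lt (le_trans (by exact_mod_cast (Cardinal.nat_lt_aleph0 2).le) hμinf) (Order.lt_succ μ))
    exact ⟨ub, hub w1 (by simp), hub w2 (by simp)⟩
  set F : Filter G := coneFilter Γ hne hdir2 with hF_def
  have hFc : IsKComplete κ F := by
    intro s hs hmem
    have hch : ∀ t : s, ∃ w : Λ, ∀ v : G, w ≤ ↑v → v ∈ (t : Set G) := fun t => hmem t t.2
    choose w hw using hch
    obtain ⟨ub, hub⟩ := hdir (Set.range w) (by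
      refine lt_of_le_of_lt Cardinal.mk_range_le ?_
      exact lt_trans (lt_trans hs hκμ) (Order.lt_succ μ))
    exact ⟨ub, fun v hv A hA => hw ⟨A, hA⟩ v ((hub _ ⟨⟨A, hA⟩, rfl⟩).trans hv)⟩
  have hFne : F.NeBot := by
    refine Filter.forall_mem_nonempty_iff_neBot.mp ?_
    rintro A ⟨w, hw⟩
    obtain ⟨v, hvΓ, hv⟩ := hΓ w
    exact ⟨⟨v, hvΓ⟩, hw ⟨v, hvΓ⟩ hv⟩
  obtain ⟨U, hUF, hUc⟩ := hsc G F hFne hFc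
  have hconeU : ∀ w : Λ, {v : G | w ≤ ↑v} ∈ U := fun w =>
    hUF (show _ ∈ F from ⟨w, fun v hv => hv⟩)
  obtain ⟨t₀, -⟩ := htree.lvl_ne hne.some
  set X : τ → Set G := fun t => {v | ∃ s ∈ SS, ℓT s = ↑v ∧ tlt t s} with hX_def
  set S' : G → Set τ := fun u => {t | ℓT t = ↑u ∧ X t ∈ U} with hS'_def
  -- coherence of S' under restriction
  have hScoh : ∀ u u' : G, (u : Λ) ≤ ↑u' → ∀ t' ∈ S' u', rest htree ↑u t' ∈ S' u := by
    intro u u' huu t' ht'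
    obtain ⟨hl', hX'⟩ := ht'
    have hle : (u : Λ) ≤ ℓT t' := by rw [hl']; exact huu
    obtain ⟨hl, hr⟩ := rest_prop htree hle
    refine ⟨hl, Filter.mem_of_superset hX' ?_⟩
    rintro v ⟨s, hsSS, hsl, hts⟩
    refine ⟨s, hsSS, hsl, ?_⟩
    rcases hr with h | h
    · exact htree.trans h hts
    · rw [h]; exact hts
  -- each S' u is nonempty
  have hSne : ∀ u : G, ∃ t, t ∈ S' u := by
    intro u
    obtain ⟨w, huw⟩ := hnomax ↑u
    have hD : {v : G | (u : Λ) < ↑v} ∈ U :=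
      Filter.mem_of_superset (hconeU w) (fun v hv => lt_of_lt_of_le huw hv)
    set f : G → τ := fun v =>
      if h : (u : Λ) < ↑v then (hpair ↑u u.2 ↑v v.2 h).choose else t₀ with hf_def
    have hfmem : ∀ v : G, (u : Λ) < ↑v → f v ∈ {t | t ∈ SS ∧ ℓT t = (u : Λ)} ∧
        ∃ s ∈ SS, ℓT s = ↑v ∧ tlt (f v) s := by
      intro v hv
      obtain ⟨ht, s, hs, hl1, hl2, hts⟩ := (hpair ↑u u.2 ↑v v.2 hv).choose_spec
      simp only [f, dif_pos hv]
      exact ⟨⟨ht, hl1⟩, s, hs, hl2, hts⟩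
    have hSsm : #{t | t ∈ SS ∧ ℓT t = (u : Λ)} < κ := lt_of_le_of_lt (hlev u) hW
    obtain ⟨b, hbS, hbU⟩ := exists_const_of_kcomplete κ hUc f _ hSsm
      (Filter.mem_of_superset hD (fun v hv => (hfmem v hv).1))
    refine ⟨b, hbS.2, ?_⟩
    refine Filter.mem_of_superset (Filter.inter_mem hbU hD) ?_
    rintro v ⟨hv1, hv2⟩
    obtain ⟨-, s, hs, hl2, hts⟩ := hfmem v hv2
    exact ⟨s, hs, hl2, by rw [← hv1]; exact hts⟩
  -- each S' u is small
  have hSsm : ∀ u : G, #(S' u) < κ := by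
    intro u
    have hsW : Order.succ W < κ :=
      lt_of_le_of_lt (Order.succ_le_of_lt (Cardinal.cantor W))
        (two_power_lt_of_sc hsc hκreg hW)
    by_contra hcon
    push_neg at hcon
    have h1 : Order.succ W ≤ #(S' u) := le_trans (le_of_lt hsW) hcon
    set ν := (Order.succ W).ord.ToType with hν_def
    have hν : #ν = Order.succ W := by rw [Cardinal.mk_toType, Cardinal.card_ord]
    obtain ⟨J⟩ := (Cardinal.le_def ν ↥(S' u)).mp (by rw [hν]; exact h1)
    have hIm : ⋂₀ (Set.range (fun j : ν => X ↑(J j))) ∈ U :=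
      hUc _ (lt_of_le_of_lt Cardinal.mk_range_le (by rw [hν]; exact hsW))
        (by rintro t ⟨j, rfl⟩; exact (J j).2.2)
    obtain ⟨v, hv⟩ := Ultrafilter.nonempty_of_mem hIm
    have hwit : ∀ j : ν, ∃ s, s ∈ SS ∧ ℓT s = ↑v ∧ tlt ↑(J j) s := by
      intro j
      obtain ⟨s, h1, h2, h3⟩ := hv _ ⟨j, rfl⟩
      exact ⟨s, h1, h2, h3⟩
    choose sj hs1 hs2 hs3 using hwit
    have hinj2 : Function.Injective
        (fun j : ν => (⟨sj j, hs1 j, hs2 j⟩ : {t : τ // t ∈ SS ∧ ℓT t = (v : Λ)})) := by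
      intro j j' hjj
      have hsj : sj j = sj j' := congrArg Subtype.val hjj
      have hub : (u : Λ) ≤ ℓT (sj j) := by
        rw [hs2 j]
        exact le_of_lt (by
          have := htree.lt_lvl _ _ (hs3 j)
          rw [(J j).2.1, hs2 j] at this
          exact this)
      have e1 : (↑(J j) : τ) = ↑(J j') := by
        refine (htree.restrict ↑u (sj j) hub).unique ⟨(J j).2.1, Or.inl (hs3 j)⟩
          ⟨(J j').2.1, Or.inl ?_⟩
        rw [hsj]
        exact hs3 j'
      exact J.injective (Subtype.ext e1)
    have hle2 : Order.succ W ≤ W := by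
      calc Order.succ W = #ν := hν.symm
        _ ≤ #{t : τ // t ∈ SS ∧ ℓT t = (v : Λ)} := Cardinal.mk_le_of_injective hinj2
        _ ≤ W := hlev v
    exact absurd hle2 (not_le_of_gt (Order.lt_succ W))
  -- choose a point in each S' v, then average
  choose τv hτv using hSne
  have hDkey : ∀ u : G, ∃ cu ∈ S' u, {v : G | rest htree ↑u (τv v) = cu} ∈ U := by
    intro u
    have hdom : {v : G | rest htree ↑u (τv v) ∈ S' u} ∈ U := by
      refine Filter.mem_of_superset (hconeU ↑u) ?_
      intro v hv
      exact hScoh u v hv (τv v) (hτv v)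
    exact exists_const_of_kcomplete κ hUc (fun v => rest htree ↑u (τv v)) (S' u) (hSsm u) hdom
  choose c hc1 hc2 using hDkey
  have hclvl : ∀ u : G, ℓT (c u) = ↑u := fun u => (hc1 u).1
  have hcoh : ∀ u u' : G, (u : Λ) ≤ ↑u' → rest htree ↑u (c u') = c u := by
    intro u u' huu
    have hm : {v : G | rest htree ↑u (τv v) = c u} ∩
        ({v | rest htree ↑u' (τv v) = c u'} ∩ {v : G | (↑u' : Λ) ≤ ↑v}) ∈ U :=
      Filter.inter_mem (hc2 u) (Filter.inter_mem (hc2 u') (hconeU ↑u'))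
    obtain ⟨v, hv1, hv2, hv3⟩ := Ultrafilter.nonempty_of_mem hm
    have hlv : ℓT (τv v) = ↑v := (hτv v).1
    have hrr := rest_rest htree huu (show (↑u' : Λ) ≤ ℓT (τv v) by rw [hlv]; exact hv3)
    rw [hv2] at hrr
    rw [hrr, hv1]
  -- build the branch on all of Λ
  have hgf' : ∀ w : Λ, ∃ v : G, w ≤ ↑v := by
    intro w
    obtain ⟨v, hvΓ, hv⟩ := hΓ w
    exact ⟨⟨v, hvΓ⟩, hv⟩
  choose gf hgf using hgf'
  set b : Λ → τ := fun w => rest htree w (c (gf w)) with hb_def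
  have hwd : ∀ (w : Λ) (u : G), w ≤ ↑u → rest htree w (c u) = b w := by
    intro w u hwu
    obtain ⟨w3, h13, h23⟩ := hdir2 ↑(gf w) ↑u
    set u3 := gf w3 with hu3_def
    have h1 : (↑(gf w) : Λ) ≤ ↑u3 := h13.trans (hgf w3)
    have h2 : (↑u : Λ) ≤ ↑u3 := h23.trans (hgf w3)
    have e1 : rest htree ↑(gf w) (c u3) = c (gf w) := hcoh (gf w) u3 h1
    have e2 : rest htree ↑u (c u3) = c u := hcoh u u3 h2
    have hl3 : ℓT (c u3) = ↑u3 := hclvl u3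
    have r1 : rest htree w (rest htree ↑(gf w) (c u3)) = rest htree w (c u3) :=
      rest_rest htree (hgf w) (by rw [hl3]; exact h1)
    have r2 : rest htree w (rest htree ↑u (c u3)) = rest htree w (c u3) :=
      rest_rest htree hwu (by rw [hl3]; exact h2)
    rw [e1] at r1
    rw [e2] at r2
    show rest htree w (c u) = rest htree w (c (gf w))
    rw [r2, ← r1]
  have hblvl : ∀ w : Λ, ℓT (b w) = w := by
    intro w
    have hh : w ≤ ℓT (c (gf w)) := by rw [hclvl]; exact hgf w
    exact (rest_prop htree hh).1
  refine ⟨b, hblvl, ?_⟩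
  intro w w' hww
  have hle' : w' ≤ ℓT (c (gf w')) := by rw [hclvl]; exact hgf w'
  have hwle : w ≤ ℓT (b w') := by rw [hblvl]; exact le_of_lt hww
  obtain ⟨hl, hr⟩ := rest_prop htree hwle
  have hkey : rest htree w (b w') = b w := by
    have hrr : rest htree w (rest htree w' (c (gf w'))) = rest htree w (c (gf w')) :=
      rest_rest htree (le_of_lt hww) hle'
    show rest htree w (rest htree w' (c (gf w'))) = b w
    rw [hrr]
    exact hwd w (gf w') ((le_of_lt hww).trans (hgf w'))
  rcases hr with h | h
  · rw [hkey] at h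
    exact h
  · exfalso
    rw [hkey] at h
    have heq : w = w' := by rw [← hblvl w, h, hblvl w']
    exact (ne_of_lt hww) heq
end

section
/- Suppose Λ is a directed partial order with no maximal element, 𝒮 is a Λ-system with a single relation R, and 𝒮 has no cofinal branch. Work in a forcing setting: let ℙ be a poset, ḃ a ℙ-name, p ∈ ℙ a condition forcing 'ḃ is a branch through R in 𝒮 meeting levels indexed by a cofinal subset of Λ'. Then there are q₀, q₁ ≤ p and x₀, x₁ ∈ S such that q_ε forces 'x_ε ∈ ḃ' for ε < 2, and x₀ ⊥_R x₁ (x₀ and x₁ are R-incompatible). -/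
/-!
Statement 14 (splitting claim): Suppose Λ is a directed partial order with no
maximal element, 𝒮 is a Λ-system with a single relation R and no cofinal
branch, ℙ is a poset, ḃ a ℙ-name and p a condition forcing "ḃ is a branch
through R meeting levels indexed by a cofinal subset of Λ". Then there are
q₀, q₁ ≤ p and x₀, x₁ ∈ S such that q_ε ⊩ x_ε ∈ ḃ and x₀ ⊥_R x₁.

The forcing relation is modelled abstractly: `forc q x` means `q ⊩ x ∈ ḃ`. The
hypotheses record exactly that this relation is a ℙ-name for a subset of S which
`p` forces to be a pairwise R-compatible set meeting cofinally many levels.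
-/

universe u

open Cardinal

theorem stmt14 {Λ : Type u} [PartialOrder Λ]
    (hdir : IsDir Λ ℵ₀) (hnomax : ∀ u : Λ, ∃ v : Λ, u < v)
    {σ : Type u} (ℓ : σ → Λ) (r : σ → σ → Prop)
    (hsys : IsLSystem ℓ (fun _ : PUnit.{u + 1} => r))
    (hnobranch : ¬ HasCofBranch ℓ (fun _ : PUnit.{u + 1} => r))
    (P : Type u) [Preorder P] (p : P)
    (forc : P → σ → Prop)
    -- `forc` is a name: forced membership persists under extension
    (hmono : ∀ ⦃q q' : P⦄, q' ≤ q → ∀ x : σ, forc q x → forc q' x)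
    -- p forces "ḃ is a branch through R": any two forced members are compatible
    (hbranch : ∀ q : P, q ≤ p → ∀ x y : σ, forc q x → forc q y → SysCompat r x y)
    -- p forces "ḃ meets levels indexed by a cofinal subset of Λ"
    (hcof : ∀ q : P, q ≤ p → ∀ u : Λ, ∃ q' : P, q' ≤ q ∧ ∃ x : σ,
      forc q' x ∧ u ≤ ℓ x) :
    ∃ q₀ : P, q₀ ≤ p ∧ ∃ q₁ : P, q₁ ≤ p ∧ ∃ x₀ x₁ : σ,
      forc q₀ x₀ ∧ forc q₁ x₁ ∧ ¬ SysCompat r x₀ x₁ := by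
  by_contra h
  push_neg at h
  apply hnobranch
  refine ⟨PUnit.unit, {x | ∃ q, q ≤ p ∧ forc q x}, ?_, ?_⟩
  · rintro x ⟨q₀, hq₀, hf₀⟩ y ⟨q₁, hq₁, hf₁⟩
    exact h q₀ hq₀ q₁ hq₁ x y hf₀ hf₁
  · intro u
    obtain ⟨q', hq', x, hfx, hux⟩ := hcof p le_rfl u
    exact ⟨x, ⟨q', hq', hfx⟩, hux⟩
end

section
/- Suppose Λ is a directed partial order with no maximal element, 𝒮 is a narrow Λ-system with width θ, ℙ is a θ⁺-closed forcing poset, and ℙ forces that there exists a full set of branches in 𝒮. Then, in the ground model, 𝒮 has a cofinal branch. -/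
/-!
Statement 15 (preservation lemma): Suppose Λ is a directed partial order with no
maximal element, 𝒮 is a narrow Λ-system of width θ, ℙ is a θ⁺-closed forcing
poset, and ℙ forces that there is a full set of branches in 𝒮. Then 𝒮 has a
cofinal branch in the ground model.

The forcing is modelled abstractly: the names ⟨ḃ_i : i ∈ I⟩ (with |I| = θ) for
the full set of branches are given by the relation `forc q i x` ("q ⊩ x ∈ ḃ_i"),
and `Rsel q i j` means "q ⊩ ḃ_i is a branch through R_j". The hypotheses record
exactly that these relations are ℙ-names which ℙ forces to constitute a full set
of branches in 𝒮.
-/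

universe u

open Cardinal

private lemma clo {P : Type u} [Preorder P] {θ : Cardinal.{u}}
    (hclosed : ∀ o : Ordinal.{u}, o ≤ θ.ord → ∀ f : ∀ i : Ordinal.{u}, i < o → P,
      (∀ (i j : Ordinal.{u}) (hi : i < o) (hj : j < o), i ≤ j → f j hj ≤ f i hi) →
      ∃ l : P, ∀ (i : Ordinal.{u}) (hi : i < o), l ≤ f i hi)
    (p₀ : P) {V : Type u} [LinearOrder V] [WellFoundedLT V]
    (hcap : Ordinal.type ((· < ·) : V → V → Prop) ≤ θ.ord ∨ Finite V)
    (g : V → P) (hg : ∀ v w : V, v ≤ w → g w ≤ g v) :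
    ∃ l : P, ∀ v, l ≤ g v := by
  rcases hcap with hcap | hcap
  · have hdec : ∀ (i j : Ordinal.{u}) (hi : i < Ordinal.type ((· < ·) : V → V → Prop))
        (hj : j < Ordinal.type ((· < ·) : V → V → Prop)), i ≤ j →
        g ((Ordinal.enum ((· < ·) : V → V → Prop)) ⟨j, hj⟩) ≤
          g ((Ordinal.enum ((· < ·) : V → V → Prop)) ⟨i, hi⟩) := by
      intro i j hi hj hij
      apply hg
      exact le_of_not_gt ((Ordinal.enum_le_enum _).2
        (show (⟨i, hi⟩ : {o // o < Ordinal.type ((· < ·) : V → V → Prop)}) ≤ ⟨j, hj⟩ from hij))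
    obtain ⟨l, hl⟩ := hclosed (Ordinal.type ((· < ·) : V → V → Prop)) hcap
      (fun i hi => g ((Ordinal.enum ((· < ·) : V → V → Prop)) ⟨i, hi⟩)) hdec
    refine ⟨l, fun v => ?_⟩
    have h1 := hl (Ordinal.typein ((· < ·) : V → V → Prop) v)
      (Ordinal.typein_lt_type _ v)
    rwa [Ordinal.enum_typein] at h1
  · rcases isEmpty_or_nonempty V with hV | hV
    · exact ⟨p₀, fun v => isEmptyElim v⟩
    · obtain ⟨m, hm⟩ := Finite.exists_max (id : V → V)
      exact ⟨g m, fun v => hg _ _ (hm v)⟩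

section Aux

variable {Λ : Type u} [PartialOrder Λ] {σ ι I : Type u} {P : Type u} [Preorder P]

/-- treelike comparison from compatibility -/
private lemma tlcomp {ℓ : σ → Λ} {R : ι → σ → σ → Prop} (hsys : IsLSystem ℓ R)
    {j : ι} {x z : σ} (h : SysCompat (R j) x z) (hle : ℓ x ≤ ℓ z) :
    R j x z ∨ x = z := by
  obtain ⟨w, hx, hz⟩ := h
  rcases hz with hz | rfl
  · rcases hx with hx | rfl
    · exact hsys.treelike j x z w hx hz hle
    · exact absurd (lt_of_lt_of_le (hsys.lt_lvl j z x hz) hle) (lt_irrefl _)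
  · exact hx

variable (ℓ : σ → Λ) (R : ι → σ → σ → Prop)
variable (forc : P → I → σ → Prop) (Rsel : P → I → ι → Prop)

/-- below `q`, the pair `(i,j)` is dead above level `v`. -/
def Dead (q : P) (i : I) (j : ι) (v : Λ) : Prop :=
  ∀ r, r ≤ q → ∀ x, Rsel r i j → forc r i x → ¬ (v ≤ ℓ x)

/-- record at a node for a pair `(i,j)`: a kill on either side or a tangle. -/
def DISJ (a b : P) (i : I) (j : ι) (lv : Λ × Λ) : Prop :=
  Dead ℓ forc Rsel a i j lv.1 ∨ Dead ℓ forc Rsel b i j lv.1 ∨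
    (∃ x x', ℓ x = lv.1 ∧ ℓ x' = lv.2 ∧ Rsel a i j ∧ forc a i x ∧ Rsel b i j ∧
      forc b i x' ∧ ¬ SysCompat (R j) x x')

variable {ℓ R forc Rsel}

private lemma dead_mono {q q' : P} (h : q' ≤ q) {i : I} {j : ι} {v : Λ}
    (hd : Dead ℓ forc Rsel q i j v) : Dead ℓ forc Rsel q' i j v :=
  fun r hr x h1 h2 => hd r (le_trans hr h) x h1 h2

private lemma disj_mono
    (hmono : ∀ ⦃q q' : P⦄, q' ≤ q → ∀ (i : I) (x : σ), forc q i x → forc q' i x)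
    (hmonoR : ∀ ⦃q q' : P⦄, q' ≤ q → ∀ (i : I) (j : ι), Rsel q i j → Rsel q' i j)
    {a b a' b' : P} (ha : a' ≤ a) (hb : b' ≤ b) {i : I} {j : ι} {lv : Λ × Λ}
    (h : DISJ ℓ R forc Rsel a b i j lv) : DISJ ℓ R forc Rsel a' b' i j lv := by
  rcases h with h | h | ⟨x, x', h1, h2, h3, h4, h5, h6, h7⟩
  · exact Or.inl (dead_mono ha h)
  · exact Or.inr (Or.inl (dead_mono hb h))
  · exact Or.inr (Or.inr ⟨x, x', h1, h2, hmonoR ha i j h3, hmono ha i x h4,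
      hmonoR hb i j h5, hmono hb i x' h6, h7⟩)


private lemma tangle (hsys : IsLSystem ℓ R)
    (hpair : ∀ x y : Λ, ∃ z : Λ, x ≤ z ∧ y ≤ z)
    (hcon : ¬ HasCofBranch ℓ R)
    (hbr : ∀ (q : P) (i : I) (j : ι) (x y : σ),
      Rsel q i j → forc q i x → forc q i y → SysCompat (R j) x y)
    {A B : P} {i : I} {j : ι}
    (hA : ∀ q, q ≤ A → ∀ v : Λ, ¬ Dead ℓ forc Rsel q i j v)
    (hB : ∀ q, q ≤ B → ∀ v : Λ, ¬ Dead ℓ forc Rsel q i j v) :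
    ∃ a b x x', a ≤ A ∧ b ≤ B ∧ Rsel a i j ∧ forc a i x ∧ Rsel b i j ∧ forc b i x' ∧
      ¬ SysCompat (R j) x x' := by
  have hA' : ∀ q, q ≤ A → ∀ v : Λ, ∃ r, r ≤ q ∧ ∃ x, Rsel r i j ∧ forc r i x ∧ v ≤ ℓ x := by
    intro q hq v
    have h := hA q hq v
    unfold Dead at h; push_neg at h
    exact h
  have hB' : ∀ q, q ≤ B → ∀ v : Λ, ∃ r, r ≤ q ∧ ∃ x, Rsel r i j ∧ forc r i x ∧ v ≤ ℓ x := by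
    intro q hq v
    have h := hB q hq v
    unfold Dead at h; push_neg at h
    exact h
  by_contra hno
  push_neg at hno
  apply hcon
  refine ⟨j, {x | ∃ a, a ≤ A ∧ Rsel a i j ∧ forc a i x}, ?_, ?_⟩
  · rintro x ⟨ρ₁, hρ₁, hr1, hf1⟩ y ⟨ρ₂, hρ₂, hr2, hf2⟩
    obtain ⟨m, hm1, hm2⟩ := hpair (ℓ x) (ℓ y)
    obtain ⟨r, hrB, z, hz1, hz2, hz3⟩ := hB' B le_rfl m
    have cxz : SysCompat (R j) x z := hno ρ₁ r x z hρ₁ hrB hr1 hf1 hz1 hz2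
    have cyz : SysCompat (R j) y z := hno ρ₂ r y z hρ₂ hrB hr2 hf2 hz1 hz2
    have h1 := tlcomp hsys cxz (le_trans hm1 hz3)
    have h2 := tlcomp hsys cyz (le_trans hm2 hz3)
    exact ⟨z, h1, h2⟩
  · intro u
    obtain ⟨r, hr, x, h1, h2, h3⟩ := hA' A le_rfl u
    exact ⟨x, ⟨r, hr, h1, h2⟩, h3⟩

private lemma pstep (hsys : IsLSystem ℓ R)
    (hpair : ∀ x y : Λ, ∃ z : Λ, x ≤ z ∧ y ≤ z)
    (hcon : ¬ HasCofBranch ℓ R)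
    (hbr : ∀ (q : P) (i : I) (j : ι) (x y : σ),
      Rsel q i j → forc q i x → forc q i y → SysCompat (R j) x y)
    (A B : P) (i : I) (j : ι) : ∃ d : (P × P) × Λ × Λ,
      d.1.1 ≤ A ∧ d.1.2 ≤ B ∧ DISJ ℓ R forc Rsel d.1.1 d.1.2 i j d.2 := by
  by_cases hA : ∃ q, q ≤ A ∧ ∃ v, Dead ℓ forc Rsel q i j v
  · obtain ⟨q, hq, v, hd⟩ := hA
    exact ⟨((q, B), (v, v)), hq, le_rfl, Or.inl hd⟩
  · by_cases hB : ∃ q, q ≤ B ∧ ∃ v, Dead ℓ forc Rsel q i j v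
    · obtain ⟨q, hq, v, hd⟩ := hB
      exact ⟨((A, q), (v, v)), le_rfl, hq, Or.inr (Or.inl hd)⟩
    · push_neg at hA hB
      obtain ⟨a, b, x, x', h1, h2, h3, h4, h5, h6, h7⟩ :=
        tangle hsys hpair hcon hbr hA hB
      exact ⟨((a, b), (ℓ x, ℓ x')), h1, h2,
        Or.inr (Or.inr ⟨x, x', rfl, rfl, h3, h4, h5, h6, h7⟩)⟩


section Rec

variable {P : Type u} [Preorder P]

open Classical in
noncomputable def LBfun {V : Type u} (c : P) (g : V → P) : P :=
  if h : ∃ l : P, l ≤ c ∧ ∀ v, l ≤ g v then h.choose else c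

lemma LBfun_le_base {V : Type u} (c : P) (g : V → P) : LBfun c g ≤ c := by
  unfold LBfun
  split_ifs with h
  · exact h.choose_spec.1
  · exact le_rfl

/-- capacity hypothesis for applying closure to chains indexed by `V`. -/
def Cap (θ : Cardinal.{u}) (V : Type u) [LinearOrder V] [WellFoundedLT V] : Prop :=
  Ordinal.type ((· < ·) : V → V → Prop) ≤ θ.ord ∨ Finite V

lemma cap_of_emb {θ : Cardinal.{u}} {V W : Type u} [LinearOrder V] [WellFoundedLT V]
    [LinearOrder W] [WellFoundedLT W] (f : V ↪o W) (h : Cap θ W) : Cap θ V := by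
  rcases h with h | h
  · exact Or.inl (le_trans (RelEmbedding.ordinal_type_le f.ltEmbedding) h)
  · exact Or.inr (Finite.of_injective f f.injective)

lemma lbfun_spec {θ : Cardinal.{u}}
    (hclosed : ∀ o : Ordinal.{u}, o ≤ θ.ord → ∀ f : ∀ i : Ordinal.{u}, i < o → P,
      (∀ (i j : Ordinal.{u}) (hi : i < o) (hj : j < o), i ≤ j → f j hj ≤ f i hi) →
      ∃ l : P, ∀ (i : Ordinal.{u}) (hi : i < o), l ≤ f i hi)
    {V : Type u} [LinearOrder V] [WellFoundedLT V] (hcap : Cap θ V)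
    (c : P) (g : V → P) (hg : ∀ v w : V, v ≤ w → g w ≤ g v) (hle : ∀ v, g v ≤ c) :
    LBfun c g ≤ c ∧ ∀ v, LBfun c g ≤ g v := by
  have hex : ∃ l : P, l ≤ c ∧ ∀ v, l ≤ g v := by
    rcases isEmpty_or_nonempty V with h | h
    · exact ⟨c, le_rfl, fun v => isEmptyElim v⟩
    · obtain ⟨l, hl⟩ := clo hclosed c hcap g hg
      exact ⟨l, le_trans (hl h.some) (hle h.some), hl⟩
  unfold LBfun
  rw [dif_pos hex]
  exact hex.choose_spec

variable {W : Type u} [LinearOrder W] [WellFoundedLT W]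

/-- generic recursion producing a pair of decreasing chains, used within blocks -/
noncomputable def pairRec (c : P) (F : P → P → W → P × P) : W → P × P :=
  wellFounded_lt.fix fun w IH =>
    F (LBfun c fun v : {v' // v' < w} => (IH v v.2).1)
      (LBfun c fun v : {v' // v' < w} => (IH v v.2).2) w

lemma pairRec_eq (c : P) (F : P → P → W → P × P) (w : W) : pairRec c F w =
    F (LBfun c fun v : {v' // v' < w} => (pairRec c F v).1)
      (LBfun c fun v : {v' // v' < w} => (pairRec c F v).2) w := by
  unfold pairRec
  rw [WellFounded.fix_eq]

lemma pairRec_le {θ : Cardinal.{u}}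
    (hclosed : ∀ o : Ordinal.{u}, o ≤ θ.ord → ∀ f : ∀ i : Ordinal.{u}, i < o → P,
      (∀ (i j : Ordinal.{u}) (hi : i < o) (hj : j < o), i ≤ j → f j hj ≤ f i hi) →
      ∃ l : P, ∀ (i : Ordinal.{u}) (hi : i < o), l ≤ f i hi)
    (hcapsub : ∀ w : W, Cap θ {v' // v' < w})
    (c : P) (F : P → P → W → P × P)
    (hF : ∀ A B w, (F A B w).1 ≤ A ∧ (F A B w).2 ≤ B) :
    ∀ w : W, ((pairRec c F w).1 ≤ c ∧ (pairRec c F w).2 ≤ c) ∧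
      ∀ v : W, v < w → (pairRec c F w).1 ≤ (pairRec c F v).1 ∧
        (pairRec c F w).2 ≤ (pairRec c F v).2 := by
  intro w
  induction w using WellFoundedLT.induction with
  | ind w IH =>
    have hg1 : ∀ v u : {v' // v' < w}, v ≤ u →
        (pairRec c F u).1 ≤ (pairRec c F v).1 := by
      intro v u hvu
      rcases eq_or_lt_of_le hvu with h | h
      · rw [h]
      · exact ((IH u u.2).2 v h).1
    have hg2 : ∀ v u : {v' // v' < w}, v ≤ u →
        (pairRec c F u).2 ≤ (pairRec c F v).2 := by
      intro v u hvu
      rcases eq_or_lt_of_le hvu with h | h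
      · rw [h]
      · exact ((IH u u.2).2 v h).2
    have hle1 : ∀ v : {v' // v' < w}, (pairRec c F v).1 ≤ c :=
      fun v => ((IH v v.2).1).1
    have hle2 : ∀ v : {v' // v' < w}, (pairRec c F v).2 ≤ c :=
      fun v => ((IH v v.2).1).2
    have hsp1 := lbfun_spec hclosed (hcapsub w) c
      (fun v : {v' // v' < w} => (pairRec c F v).1) hg1 hle1
    have hsp2 := lbfun_spec hclosed (hcapsub w) c
      (fun v : {v' // v' < w} => (pairRec c F v).2) hg2 hle2
    have heq := pairRec_eq c F w
    constructor
    · constructor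
      · rw [heq]; exact le_trans (hF _ _ w).1 hsp1.1
      · rw [heq]; exact le_trans (hF _ _ w).2 hsp2.1
    · intro v hv
      constructor
      · rw [heq]; exact le_trans (hF _ _ w).1 (hsp1.2 ⟨v, hv⟩)
      · rw [heq]; exact le_trans (hF _ _ w).2 (hsp2.2 ⟨v, hv⟩)

end Rec


section Tree

variable {P : Type u} [Preorder P] {W : Type u} [LinearOrder W] [WellFoundedLT W]

noncomputable def treeRec (p₀ : P) (G : P → Bool → P) (f : W → Bool) : W → P :=
  wellFounded_lt.fix fun α IH => G (LBfun p₀ fun v : {β // β < α} => IH v v.2) (f α)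

lemma treeRec_eq (p₀ : P) (G : P → Bool → P) (f : W → Bool) (α : W) :
    treeRec p₀ G f α =
      G (LBfun p₀ fun v : {β // β < α} => treeRec p₀ G f v) (f α) := by
  unfold treeRec
  rw [WellFounded.fix_eq]

lemma treeRec_le {θ : Cardinal.{u}}
    (hclosed : ∀ o : Ordinal.{u}, o ≤ θ.ord → ∀ f : ∀ i : Ordinal.{u}, i < o → P,
      (∀ (i j : Ordinal.{u}) (hi : i < o) (hj : j < o), i ≤ j → f j hj ≤ f i hi) →
      ∃ l : P, ∀ (i : Ordinal.{u}) (hi : i < o), l ≤ f i hi)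
    (hcapsub : ∀ w : W, Cap θ {v' // v' < w})
    (p₀ : P) (G : P → Bool → P) (hG : ∀ c s, G c s ≤ c) (f : W → Bool) :
    ∀ α : W, treeRec p₀ G f α ≤ p₀ ∧
      (∀ β : W, β < α → treeRec p₀ G f α ≤ treeRec p₀ G f β) ∧
      treeRec p₀ G f α ≤ LBfun p₀ fun v : {β // β < α} => treeRec p₀ G f v := by
  intro α
  induction α using WellFoundedLT.induction with
  | ind α IH =>
    have hg : ∀ v u : {β // β < α}, v ≤ u →
        treeRec p₀ G f u ≤ treeRec p₀ G f v := by
      intro v u hvu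
      rcases eq_or_lt_of_le hvu with h | h
      · rw [h]
      · exact ((IH u u.2).2).1 v h
    have hle : ∀ v : {β // β < α}, treeRec p₀ G f v ≤ p₀ :=
      fun v => (IH v v.2).1
    have hsp := lbfun_spec hclosed (hcapsub α) p₀
      (fun v : {β // β < α} => treeRec p₀ G f v) hg hle
    have heq := treeRec_eq p₀ G f α
    refine ⟨?_, ?_, ?_⟩
    · rw [heq]; exact le_trans (hG _ _) hsp.1
    · intro β hβ; rw [heq]; exact le_trans (hG _ _) (hsp.2 ⟨β, hβ⟩)
    · rw [heq]; exact hG _ _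

lemma treeRec_congr (p₀ : P) (G : P → Bool → P) (f g : W → Bool) :
    ∀ α : W, (∀ β : W, β ≤ α → f β = g β) → treeRec p₀ G f α = treeRec p₀ G g α := by
  intro α
  induction α using WellFoundedLT.induction with
  | ind α IH =>
    intro hagree
    rw [treeRec_eq, treeRec_eq]
    have hch : (fun v : {β // β < α} => treeRec p₀ G f v) =
        (fun v : {β // β < α} => treeRec p₀ G g v) := by
      funext v
      exact IH v v.2 fun β hβ => hagree β (le_trans hβ (le_of_lt v.2))
    rw [hch, hagree α le_rfl]

def padf (α : W) (h : {β // β < α} → Bool) : W → Bool :=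
  fun β => if hb : β < α then h ⟨β, hb⟩ else false

end Tree


private lemma blocklemma {θ : Cardinal.{u}} (hsys : IsLSystem ℓ R)
    (hpair : ∀ x y : Λ, ∃ z : Λ, x ≤ z ∧ y ≤ z)
    (hcon : ¬ HasCofBranch ℓ R)
    (hbr : ∀ (q : P) (i : I) (j : ι) (x y : σ),
      Rsel q i j → forc q i x → forc q i y → SysCompat (R j) x y)
    (hmono : ∀ ⦃q q' : P⦄, q' ≤ q → ∀ (i : I) (x : σ), forc q i x → forc q' i x)
    (hmonoR : ∀ ⦃q q' : P⦄, q' ≤ q → ∀ (i : I) (j : ι), Rsel q i j → Rsel q' i j)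
    (hclosed : ∀ o : Ordinal.{u}, o ≤ θ.ord → ∀ f : ∀ i : Ordinal.{u}, i < o → P,
      (∀ (i j : Ordinal.{u}) (hi : i < o) (hj : j < o), i ≤ j → f j hj ≤ f i hi) →
      ∃ l : P, ∀ (i : Ordinal.{u}) (hi : i < o), l ≤ f i hi)
    {W : Type u} [LinearOrder W] [WellFoundedLT W]
    (hcapsub : ∀ w : W, Cap θ {v' // v' < w}) (hcapW : Cap θ W)
    (π : W → I × ι) (hπ : Function.Surjective π) (c : P) :
    ∃ ab : P × P, ab.1 ≤ c ∧ ab.2 ≤ c ∧ ∀ (i : I) (j : ι), ∃ lv : Λ × Λ,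
      DISJ ℓ R forc Rsel ab.1 ab.2 i j lv := by
  classical
  set F : P → P → W → P × P :=
    fun A B w => ((pstep hsys hpair hcon hbr A B (π w).1 (π w).2).choose).1 with hF
  have hFspec : ∀ A B w, (F A B w).1 ≤ A ∧ (F A B w).2 ≤ B := by
    intro A B w
    have h := (pstep hsys hpair hcon hbr A B (π w).1 (π w).2).choose_spec
    exact ⟨h.1, h.2.1⟩
  have hmain := pairRec_le hclosed hcapsub c F hFspec
  have hkey : ∀ w : W, ∃ lv : Λ × Λ,
      DISJ ℓ R forc Rsel (pairRec c F w).1 (pairRec c F w).2 (π w).1 (π w).2 lv := by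
    intro w
    have heq := pairRec_eq c F w
    have hd := (pstep hsys hpair hcon hbr
        (LBfun c fun v : {v' // v' < w} => (pairRec c F v).1)
        (LBfun c fun v : {v' // v' < w} => (pairRec c F v).2) (π w).1 (π w).2).choose_spec
    refine ⟨((pstep hsys hpair hcon hbr
        (LBfun c fun v : {v' // v' < w} => (pairRec c F v).1)
        (LBfun c fun v : {v' // v' < w} => (pairRec c F v).2) (π w).1 (π w).2).choose).2, ?_⟩
    rw [heq]
    exact hd.2.2
  have hg1 : ∀ v w : W, v ≤ w → (pairRec c F w).1 ≤ (pairRec c F v).1 := by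
    intro v w hvw
    rcases eq_or_lt_of_le hvw with h | h
    · rw [h]
    · exact ((hmain w).2 v h).1
  have hg2 : ∀ v w : W, v ≤ w → (pairRec c F w).2 ≤ (pairRec c F v).2 := by
    intro v w hvw
    rcases eq_or_lt_of_le hvw with h | h
    · rw [h]
    · exact ((hmain w).2 v h).2
  have hsp1 := lbfun_spec hclosed hcapW c (fun w => (pairRec c F w).1)
    (fun v w h => hg1 v w h) (fun w => (hmain w).1.1)
  have hsp2 := lbfun_spec hclosed hcapW c (fun w => (pairRec c F w).2)
    (fun v w h => hg2 v w h) (fun w => (hmain w).1.2)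
  refine ⟨(LBfun c fun w => (pairRec c F w).1, LBfun c fun w => (pairRec c F w).2),
    hsp1.1, hsp2.1, ?_⟩
  intro i j
  obtain ⟨w, hw⟩ := hπ (i, j)
  obtain ⟨lv, hlv⟩ := hkey w
  refine ⟨lv, ?_⟩
  have := disj_mono hmono hmonoR (hsp1.2 w) (hsp2.2 w) hlv
  rw [hw] at this
  exact this




theorem stmt15 {Λ : Type u} [PartialOrder Λ]
    (hnomax : ∀ u : Λ, ∃ v : Λ, u < v)
    {σ ι : Type u} (ℓ : σ → Λ) (R : ι → σ → σ → Prop)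
    (hsys : IsLSystem ℓ R)
    (θ : Cardinal.{u}) (hθ : θ = sysWidth ℓ R)
    -- 𝒮 is narrow: width(𝒮)⁺ < d_Λ
    (hnarrow : Order.succ θ < dirCard Λ)
    (P : Type u) [Preorder P]
    -- ℙ is θ⁺-closed: decreasing sequences of length ≤ θ have lower bounds
    (hclosed : ∀ o : Ordinal.{u}, o ≤ θ.ord → ∀ f : ∀ i : Ordinal.{u}, i < o → P,
      (∀ (i j : Ordinal.{u}) (hi : i < o) (hj : j < o), i ≤ j → f j hj ≤ f i hi) →
      ∃ l : P, ∀ (i : Ordinal.{u}) (hi : i < o), l ≤ f i hi)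
    (I : Type u) (hI : #I = θ)
    (forc : P → I → σ → Prop) (Rsel : P → I → ι → Prop)
    -- names: forced statements persist under extension
    (hmono : ∀ ⦃q q' : P⦄, q' ≤ q → ∀ (i : I) (x : σ), forc q i x → forc q' i x)
    (hmonoR : ∀ ⦃q q' : P⦄, q' ≤ q → ∀ (i : I) (j : ι), Rsel q i j → Rsel q' i j)
    -- ℙ forces each ḃ_i to be a branch through some relation of 𝒮:
    (hdec : ∀ (q : P) (i : I), ∃ q' : P, q' ≤ q ∧ ∃ j : ι, Rsel q' i j)
    (hbr : ∀ (q : P) (i : I) (j : ι) (x y : σ),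
      Rsel q i j → forc q i x → forc q i y → SysCompat (R j) x y)
    -- ℙ forces {ḃ_i : i ∈ I} to be full: every level is met by some ḃ_i
    (hfull : ∀ (q : P) (u : Λ), ∃ q' : P, q' ≤ q ∧ ∃ (i : I) (x : σ),
      forc q' i x ∧ ℓ x = u) :
    HasCofBranch ℓ R := by
  by_contra hcon
  rcases isEmpty_or_nonempty Λ with hΛ | hΛ
  · exact hcon ⟨hsys.idx_ne.some, ∅,
      fun x hx => absurd hx (Set.notMem_empty x), fun u => isEmptyElim u⟩
  classical
  simp only [sysWidth] at hθ
  -- basic cardinal facts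
  have hbdd : BddAbove (Set.range fun u : Λ => #{x : σ // ℓ x = u}) :=
    Cardinal.bddAbove_range _
  have hlev : ∀ u : Λ, #{x : σ // ℓ x = u} ≤ θ := by
    intro u
    rw [hθ]
    exact le_trans (le_ciSup hbdd u) (le_max_left _ _)
  have hι : #ι ≤ θ := by rw [hθ]; exact le_max_right _ _
  have hθ1 : (1 : Cardinal.{u}) ≤ θ := by
    obtain ⟨u⟩ := hΛ
    obtain ⟨x, hx⟩ := hsys.lvl_ne u
    exact le_trans (Cardinal.one_le_iff_ne_zero.2
      (Cardinal.mk_ne_zero_iff.2 ⟨⟨x, hx⟩⟩)) (hlev u)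
  -- directedness consequences of narrowness
  have hdir : ∀ s : Set Λ, #s < dirCard Λ → ∃ z : Λ, ∀ x ∈ s, x ≤ z := by
    intro s hs
    by_contra hno
    push_neg at hno
    have hle : dirCard Λ ≤ #s := by
      unfold dirCard
      refine csSup_le ⟨0, ?_⟩ ?_
      · intro t ht
        exact absurd ht (not_lt.2 (Cardinal.zero_le _))
      · intro κ hκ
        rw [Set.mem_setOf_eq] at hκ
        by_contra hκs
        obtain ⟨z, hz⟩ := hκ s (lt_of_not_ge hκs)
        obtain ⟨x, hx, hx'⟩ := hno z
        exact hx' (hz x hx)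
    exact absurd (lt_of_lt_of_le hs hle) (lt_irrefl _)
  have hθdir : θ < dirCard Λ := lt_trans (Order.lt_succ θ) hnarrow
  have hpair : ∀ x y : Λ, ∃ z : Λ, x ≤ z ∧ y ≤ z := by
    intro x y
    have h2 : #({x, y} : Set Λ) ≤ 2 := by
      calc #({x, y} : Set Λ) ≤ #({y} : Set Λ) + 1 := Cardinal.mk_insert_le
      _ = 1 + 1 := by rw [Cardinal.mk_singleton]
      _ = 2 := one_add_one_eq_two
    have h2' : (2 : Cardinal.{u}) ≤ Order.succ θ := by
      have h := Cardinal.add_one_le_succ θ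
      have h1 : (2 : Cardinal.{u}) ≤ θ + 1 := by
        have h0 := add_le_add hθ1 (le_refl (1 : Cardinal.{u}))
        rwa [show (1 : Cardinal.{u}) + 1 = 2 from one_add_one_eq_two] at h0
      exact le_trans h1 h
    obtain ⟨z, hz⟩ := hdir _ (lt_of_le_of_lt (le_trans h2 h2') hnarrow)
    exact ⟨z, hz x (by simp), hz y (by simp)⟩
  have hfinub : ∀ s : Set Λ, s.Finite → ∃ z : Λ, ∀ x ∈ s, x ≤ z := by
    intro s hs
    refine Set.Finite.induction_on s hs ⟨hΛ.some, by simp⟩ ?_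
    rintro a t - - ⟨z, hz⟩
    obtain ⟨z', hz1, hz2⟩ := hpair a z
    refine ⟨z', ?_⟩
    rintro x (rfl | hx)
    · exact hz1
    · exact le_trans (hz x hx) hz2
  -- P is nonempty
  obtain ⟨p₀, -⟩ := hclosed 0 zero_le
    (fun i hi => (zero_le.not_gt hi).elim)
    (fun i j hi hj _ => (zero_le.not_gt hi).elim)
  -- cardinals τ and δ
  set τ : Cardinal.{u} := θ * (θ * θ) with hτdef
  set δ : Cardinal.{u} := sInf {c : Cardinal.{u} | τ < 2 ^ c} with hδdef
  have hδmem : τ < 2 ^ δ := by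
    have h := csInf_mem (s := {c : Cardinal.{u} | τ < 2 ^ c})
      ⟨τ, show τ < 2 ^ τ from Cardinal.cantor τ⟩
    exact h
  have hδmin : ∀ μ : Cardinal.{u}, μ < δ → 2 ^ μ ≤ τ := by
    intro μ hμ
    by_contra h
    have h' : δ ≤ μ := csInf_le (OrderBot.bddBelow _)
      (show τ < 2 ^ μ from lt_of_not_ge h)
    exact absurd h' (not_le.2 hμ)
  have hδτ : δ ≤ τ := csInf_le (OrderBot.bddBelow _)
    (show τ < 2 ^ τ from Cardinal.cantor τ)
  have hτfin : θ < Cardinal.aleph0 → τ < Cardinal.aleph0 :=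
    fun h => Cardinal.mul_lt_aleph0 h (Cardinal.mul_lt_aleph0 h h)
  have hτθ : Cardinal.aleph0 ≤ θ → τ = θ := by
    intro h
    rw [hτdef, Cardinal.mul_eq_self h, Cardinal.mul_eq_self h]
  have hδθ : Cardinal.aleph0 ≤ θ → δ ≤ θ := by
    intro h
    exact csInf_le (OrderBot.bddBelow _)
      (show τ < 2 ^ θ by rw [hτθ h]; exact Cardinal.cantor θ)
  -- the sweep index X and the surjection π
  have hXcard : #((θ * θ).ord.ToType) = θ * θ := by
    rw [Cardinal.mk_toType, Cardinal.card_ord]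
  have hIι : #(I × ι) ≤ θ * θ := by
    rw [Cardinal.mk_prod, Cardinal.lift_id, Cardinal.lift_id, hI]
    exact mul_le_mul_right hι θ
  have hneI : Nonempty I := Cardinal.mk_ne_zero_iff.1
    (Cardinal.one_le_iff_ne_zero.1 (by rw [hI]; exact hθ1))
  haveI hneIι : Nonempty (I × ι) := ⟨⟨hneI.some, hsys.idx_ne.some⟩⟩
  obtain ⟨emb⟩ : Nonempty ((I × ι) ↪ (θ * θ).ord.ToType) :=
    (Cardinal.le_def _ _).1 (by rw [hXcard]; exact hIι)
  set π : (θ * θ).ord.ToType → I × ι := Function.invFun emb with hπdef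
  have hπ : Function.Surjective π := Function.invFun_surjective emb.injective
  have hcapX : Cap θ ((θ * θ).ord.ToType) := by
    rcases lt_or_ge θ Cardinal.aleph0 with hfin | hinf
    · exact Or.inr (Cardinal.lt_aleph0_iff_finite.1
        (by rw [hXcard]; exact Cardinal.mul_lt_aleph0 hfin hfin))
    · refine Or.inl ?_
      rw [Ordinal.type_toType, Cardinal.mul_eq_self hinf]
  have hcapXsub : ∀ w : (θ * θ).ord.ToType, Cap θ {v' // v' < w} :=
    fun w => cap_of_emb (OrderEmbedding.subtype _) hcapX
  -- the tree index B
  have hBcard : #(δ.ord.ToType) = δ := by rw [Cardinal.mk_toType, Cardinal.card_ord]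
  have hcapB : Cap θ (δ.ord.ToType) := by
    rcases lt_or_ge θ Cardinal.aleph0 with hfin | hinf
    · exact Or.inr (Cardinal.lt_aleph0_iff_finite.1
        (by rw [hBcard]; exact lt_of_le_of_lt hδτ (hτfin hfin)))
    · refine Or.inl ?_
      rw [Ordinal.type_toType]
      exact Cardinal.ord_le_ord.2 (hδθ hinf)
  have hcapBsub : ∀ w : δ.ord.ToType, Cap θ {v' // v' < w} :=
    fun w => cap_of_emb (OrderEmbedding.subtype _) hcapB
  -- block lemma, packaged
  set BLW : P → P × P := fun c =>
    (blocklemma hsys hpair hcon hbr hmono hmonoR hclosed hcapXsub hcapX π hπ c).choose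
    with hBLWdef
  have hBLW : ∀ c : P, (BLW c).1 ≤ c ∧ (BLW c).2 ≤ c ∧ ∀ (i : I) (j : ι),
      ∃ lv : Λ × Λ, DISJ ℓ R forc Rsel (BLW c).1 (BLW c).2 i j lv :=
    fun c => (blocklemma hsys hpair hcon hbr hmono hmonoR hclosed hcapXsub hcapX π hπ c).choose_spec
  set G : P → Bool → P := fun c s => cond s (BLW c).2 (BLW c).1 with hGdef
  have hG : ∀ (c : P) (s : Bool), G c s ≤ c := by
    intro c s
    cases s
    · exact (hBLW c).1
    · exact (hBLW c).2.1
  -- level record extraction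
  set LV : P → I → ι → Λ × Λ := fun c i j => ((hBLW c).2.2 i j).choose with hLVdef
  have hLV : ∀ (c : P) (i : I) (j : ι),
      DISJ ℓ R forc Rsel (BLW c).1 (BLW c).2 i j (LV c i j) :=
    fun c i j => ((hBLW c).2.2 i j).choose_spec
  set CC : (Σ α : δ.ord.ToType, ({β // β < α} → Bool)) → P := fun k =>
    LBfun p₀ (fun v : {β // β < k.1} => treeRec p₀ G (padf k.1 k.2) v) with hCCdef
  set LEV : ((Σ α : δ.ord.ToType, ({β // β < α} → Bool)) × (I × ι)) → Λ × Λ :=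
    fun z => LV (CC z.1) z.2.1 z.2.2 with hLEVdef
  -- the cap level U
  obtain ⟨U, hU⟩ : ∃ U : Λ, ∀ z, (LEV z).1 ≤ U ∧ (LEV z).2 ≤ U := by
    have key : ∃ U : Λ, ∀ l ∈ (Set.range fun z => (LEV z).1) ∪
        (Set.range fun z => (LEV z).2), l ≤ U := by
      rcases lt_or_ge θ Cardinal.aleph0 with hfin | hinf
      · haveI : Finite I := Cardinal.lt_aleph0_iff_finite.1 (by rw [hI]; exact hfin)
        haveI : Finite ι := Cardinal.lt_aleph0_iff_finite.1 (lt_of_le_of_lt hι hfin)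
        haveI : Finite (δ.ord.ToType) := Cardinal.lt_aleph0_iff_finite.1
          (by rw [hBcard]; exact lt_of_le_of_lt hδτ (hτfin hfin))
        exact hfinub _ (Set.Finite.union (Set.finite_range _) (Set.finite_range _))
      · apply hdir
        have hsub : ∀ α : δ.ord.ToType, #{β // β < α} < δ := by
          intro α
          haveI hwoB : IsWellOrder δ.ord.ToType (· < ·) := isWellOrder_lt
          have h2 := Ordinal.typein_lt_type
            ((· < ·) : δ.ord.ToType → δ.ord.ToType → Prop) α
          rw [Ordinal.type_toType] at h2
          have h1 := Ordinal.card_typein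
            (r := ((· < ·) : δ.ord.ToType → δ.ord.ToType → Prop)) α
          rw [← h1]
          exact Cardinal.lt_ord.1 h2
        have harrow : ∀ α : δ.ord.ToType, #({β // β < α} → Bool) ≤ τ := by
          intro α
          rw [Cardinal.mk_arrow, Cardinal.lift_uzero, Cardinal.mk_bool, Cardinal.lift_two]
          exact hδmin _ (hsub α)
        have hK : #(Σ α : δ.ord.ToType, ({β // β < α} → Bool)) ≤ δ * τ := by
          rw [Cardinal.mk_sigma]
          calc Cardinal.sum (fun α : δ.ord.ToType => #({β // β < α} → Bool))
              ≤ Cardinal.sum (fun _ : δ.ord.ToType => τ) :=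
                Cardinal.sum_le_sum _ _ harrow
            _ = #(δ.ord.ToType) * τ := Cardinal.sum_const' _ _
            _ = δ * τ := by rw [hBcard]
        have hmul : ∀ a b : Cardinal.{u}, a ≤ θ → b ≤ θ → a * b ≤ θ := by
          intro a b ha hb
          exact le_trans (mul_le_mul' ha hb) (le_of_eq (Cardinal.mul_eq_self hinf))
        have hKθ : #(Σ α : δ.ord.ToType, ({β // β < α} → Bool)) ≤ θ :=
          le_trans hK (hmul _ _ (hδθ hinf) (le_of_eq (hτθ hinf)))
        have hidx : #((Σ α : δ.ord.ToType, ({β // β < α} → Bool)) × (I × ι)) ≤ θ := by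
          rw [Cardinal.mk_prod, Cardinal.lift_id, Cardinal.lift_id]
          apply hmul _ _ hKθ
          rw [Cardinal.mk_prod, Cardinal.lift_id, Cardinal.lift_id, hI]
          exact hmul _ _ le_rfl hι
        have hadd : #((Set.range fun z => (LEV z).1) ∪
            (Set.range fun z => (LEV z).2) : Set Λ) ≤ θ := by
          refine le_trans (Cardinal.mk_union_le _ _) ?_
          have h1 : #(Set.range fun z => (LEV z).1) ≤ θ :=
            le_trans Cardinal.mk_range_le hidx
          have h2 : #(Set.range fun z => (LEV z).2) ≤ θ :=
            le_trans Cardinal.mk_range_le hidx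
          calc #(Set.range fun z => (LEV z).1) + #(Set.range fun z => (LEV z).2)
              ≤ θ + θ := add_le_add h1 h2
            _ = θ := Cardinal.add_eq_self hinf
        exact lt_of_le_of_lt hadd hθdir
    obtain ⟨U, hU⟩ := key
    exact ⟨U, fun z => ⟨hU _ (Or.inl ⟨z, rfl⟩), hU _ (Or.inr ⟨z, rfl⟩)⟩⟩
  -- realizing the level U below any condition
  have hreal : ∀ q : P, ∃ d : P × I × ι × σ, d.1 ≤ q ∧ Rsel d.1 d.2.1 d.2.2.1 ∧
      forc d.1 d.2.1 d.2.2.2 ∧ ℓ d.2.2.2 = U := by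
    intro q
    obtain ⟨q', hq', i, x, hfx, hlx⟩ := hfull q U
    obtain ⟨r, hr, j, hrs⟩ := hdec q' i
    exact ⟨(r, i, j, x), le_trans hr hq', hrs, hmono hr i x hfx, hlx⟩
  -- lower bounds of branches
  have hQf : ∀ f : δ.ord.ToType → Bool, ∀ α : δ.ord.ToType,
      LBfun p₀ (treeRec p₀ G f) ≤ treeRec p₀ G f α := by
    intro f
    have h := treeRec_le hclosed hcapBsub p₀ G hG f
    have hanti : ∀ v w : δ.ord.ToType, v ≤ w → treeRec p₀ G f w ≤ treeRec p₀ G f v := by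
      intro v w hvw
      rcases eq_or_lt_of_le hvw with h' | h'
      · rw [h']
      · exact (h w).2.1 v h'
    exact (lbfun_spec hclosed hcapB p₀ (treeRec p₀ G f) hanti (fun v => (h v).1)).2
  -- the branch invariant
  set PHI : (δ.ord.ToType → Bool) → ({x : σ // ℓ x = U} × (I × ι)) := fun f =>
    (⟨(hreal (LBfun p₀ (treeRec p₀ G f))).choose.2.2.2,
      (hreal (LBfun p₀ (treeRec p₀ G f))).choose_spec.2.2.2⟩,
     ((hreal (LBfun p₀ (treeRec p₀ G f))).choose.2.1,
      (hreal (LBfun p₀ (treeRec p₀ G f))).choose.2.2.1)) with hPHIdef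
  have hnotinj : ¬ Function.Injective PHI := by
    intro hinj
    have h1 : #(δ.ord.ToType → Bool) ≤ #({x : σ // ℓ x = U} × (I × ι)) :=
      Cardinal.mk_le_of_injective hinj
    have h2 : #(δ.ord.ToType → Bool) = 2 ^ δ := by
      rw [Cardinal.mk_arrow, Cardinal.lift_uzero, Cardinal.mk_bool, Cardinal.lift_two,
        hBcard]
    have h3 : #({x : σ // ℓ x = U} × (I × ι)) ≤ τ := by
      rw [Cardinal.mk_prod, Cardinal.lift_id, Cardinal.lift_id]
      apply mul_le_mul' (hlev U)
      rw [Cardinal.mk_prod, Cardinal.lift_id, Cardinal.lift_id, hI]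
      exact mul_le_mul_right hι θ
    rw [h2] at h1
    exact absurd (le_trans h1 h3) (not_le.2 hδmem)
  obtain ⟨f, g, hfg, hne'⟩ := Function.not_injective_iff.1 hnotinj
  -- least level of disagreement
  set D : Set (δ.ord.ToType) := {α | f α ≠ g α} with hDdef
  have hDne : D.Nonempty := by
    by_contra h
    rw [Set.not_nonempty_iff_eq_empty] at h
    apply hne'
    funext α
    by_contra hα
    exact absurd (show α ∈ D from hα) (by rw [h]; exact Set.notMem_empty α)
  set α₀ : δ.ord.ToType := WellFounded.min wellFounded_lt D hDne with hα₀def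
  have hα₀mem : α₀ ∈ D := WellFounded.min_mem wellFounded_lt D hDne
  have hagree : ∀ β : δ.ord.ToType, β < α₀ → f β = g β := by
    intro β hβ
    by_contra h
    exact WellFounded.not_lt_min wellFounded_lt D (show β ∈ D from h) hβ
  -- the common node condition
  set c₀ : P := LBfun p₀ (fun v : {β // β < α₀} => treeRec p₀ G f v) with hc₀def
  have hchain_eq : (fun v : {β // β < α₀} => treeRec p₀ G f v) =
      (fun v : {β // β < α₀} => treeRec p₀ G g v) := by
    funext v
    exact treeRec_congr p₀ G f g v (fun β hβ => hagree β (lt_of_le_of_lt hβ v.2))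
  have hsf : treeRec p₀ G f α₀ = G c₀ (f α₀) := treeRec_eq p₀ G f α₀
  have hsg : treeRec p₀ G g α₀ = G c₀ (g α₀) := by
    rw [treeRec_eq p₀ G g α₀, hc₀def, hchain_eq]
  -- c₀ agrees with the canonical padded version
  have hpadeq : c₀ = CC ⟨α₀, fun v => f v⟩ := by
    rw [hCCdef, hc₀def]
    congr 1
    funext v
    refine treeRec_congr p₀ G f (padf α₀ fun v : {β // β < α₀} => f v) v ?_
    intro β hβ
    have hβα : β < α₀ := lt_of_le_of_lt hβ v.2
    simp only [padf, dif_pos hβα]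
  -- extract PHI data
  set qf : P := LBfun p₀ (treeRec p₀ G f) with hqfdef
  set qg : P := LBfun p₀ (treeRec p₀ G g) with hqgdef
  obtain ⟨hrf_le, hrf_rsel, hrf_forc, hrf_lvl⟩ := (hreal qf).choose_spec
  obtain ⟨hrg_le, hrg_rsel, hrg_forc, hrg_lvl⟩ := (hreal qg).choose_spec
  have hPHIfg := hfg
  rw [hPHIdef] at hPHIfg
  simp only [Prod.mk.injEq, Subtype.mk.injEq] at hPHIfg
  obtain ⟨hyeq, hieq, hjeq⟩ := hPHIfg
  rw [← hqfdef, ← hqgdef] at hyeq hieq hjeq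
  rw [← hieq, ← hjeq] at hrg_rsel
  rw [← hieq] at hrg_forc
  rw [← hyeq] at hrg_forc hrg_lvl
  set i' : I := (hreal qf).choose.2.1 with hi'def
  set j' : ι := (hreal qf).choose.2.2.1 with hj'def
  set y' : σ := (hreal qf).choose.2.2.2 with hy'def
  set rf : P := (hreal qf).choose.1 with hrfdef
  set rg : P := (hreal qg).choose.1 with hrgdef
  -- level bounds for the record at (c₀, i', j')
  have hlv1 : (LV c₀ i' j').1 ≤ U := by
    have h := (hU (⟨α₀, fun v => f v⟩, (i', j'))).1
    rw [hLEVdef] at h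
    simp only at h
    rwa [← hpadeq] at h
  have hlv2 : (LV c₀ i' j').2 ≤ U := by
    have h := (hU (⟨α₀, fun v => f v⟩, (i', j'))).2
    rw [hLEVdef] at h
    simp only at h
    rwa [← hpadeq] at h
  -- the endgame, symmetric in the two sides
  have endgame : ∀ ra rb : P, ra ≤ (BLW c₀).1 → rb ≤ (BLW c₀).2 →
      Rsel ra i' j' → forc ra i' y' → Rsel rb i' j' → forc rb i' y' → False := by
    intro ra rb hra hrb hrsa hfa hrsb hfb
    rcases hLV c₀ i' j' with hd | hd | ⟨x, x', hx1, hx2, hxa, hfxa, hxb, hfxb, hnc⟩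
    · exact hd ra hra y' hrsa hfa (by rw [hrf_lvl]; exact hlv1)
    · exact hd rb hrb y' hrsb hfb (by rw [hrf_lvl]; exact hlv1)
    · have c1 : SysCompat (R j') x y' :=
        hbr ra i' j' x y' hrsa (hmono hra i' x hfxa) hfa
      have c2 : SysCompat (R j') x' y' :=
        hbr rb i' j' x' y' hrsb (hmono hrb i' x' hfxb) hfb
      have o1 := tlcomp hsys c1 (by rw [hx1, hrf_lvl]; exact hlv1)
      have o2 := tlcomp hsys c2 (by rw [hx2, hrf_lvl]; exact hlv2)
      exact hnc ⟨y', o1, o2⟩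
  -- orientations
  have hα₀ne : f α₀ ≠ g α₀ := hα₀mem
  cases hbf : f α₀ with
  | false =>
    have hbg : g α₀ = true := by
      cases hbg : g α₀
      · exact absurd (hbf.trans hbg.symm) hα₀ne
      · rfl
    have hqfa : qf ≤ (BLW c₀).1 := by
      have h := hQf f α₀
      rw [hsf, hbf] at h
      exact h
    have hqgb : qg ≤ (BLW c₀).2 := by
      have h := hQf g α₀
      rw [hsg, hbg] at h
      exact h
    exact endgame rf rg (le_trans hrf_le hqfa) (le_trans hrg_le hqgb)
      hrf_rsel hrf_forc hrg_rsel hrg_forc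
  | true =>
    have hbg : g α₀ = false := by
      cases hbg : g α₀
      · rfl
      · exact absurd (hbf.trans hbg.symm) hα₀ne
    have hqfb : qf ≤ (BLW c₀).2 := by
      have h := hQf f α₀
      rw [hsf, hbf] at h
      exact h
    have hqga : qg ≤ (BLW c₀).1 := by
      have h := hQf g α₀
      rw [hsg, hbg] at h
      exact h
    exact endgame rg rf (le_trans hrg_le hqga) (le_trans hrf_le hqfb)
      hrg_rsel hrg_forc hrf_rsel hrf_forc

end Aux
end

section
/- Suppose μ is a singular cardinal, θ = cf(μ), λ = μ⁺, 𝒟 is a uniform transitive θ-covering matrix for λ, κ ∈ (θ⁺, μ) is regular, A = {x ∈ 𝒫_κ λ : cf(ssup(x)) > θ}, and for x ∈ A, γ_x < λ is least such that for all β ∈ [γ_x, λ) there is i < θ with x ∩ D(j,β) = x ∩ D(j,γ_x) for all j ∈ [i,θ) (such γ_x exists by downward coherence). Define S_x := {x ∩ D(i,γ_x) : i < θ and sup(x ∩ D(i,γ_x)) = sup(x)}. Then 𝒮 = ⟨S_x : x ∈ A⟩ is a narrow concrete 𝒫_κ λ-system of width at most θ: each S_x is nonempty, and for all x ⊆ y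 in A there is t ∈ S_y with t ∩ x ∈ S_x. -/
/-!
Statement 17: With μ singular, θ = cf(μ), λ = μ⁺, 𝒟 a uniform transitive
θ-covering matrix for λ, κ ∈ (θ⁺, μ) regular, A = {x ∈ 𝒫_κ λ : cf(ssup x) > θ},
γ_x least as in downward coherence, and
S_x := {x ∩ D(i,γ_x) : i < θ, sup(x ∩ D(i,γ_x)) = sup(x)}, the structure
𝒮 = ⟨S_x : x ∈ A⟩ is a narrow concrete 𝒫_κ λ-system of width at most θ.
-/

open Cardinal

open Cardinal Set Order

lemma bddAbove_of_forall_lt {s : Set Ordinal.{0}} {c : Ordinal.{0}} (hs : ∀ a ∈ s, a < c) :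
    BddAbove s := ⟨c, fun a ha => (hs a ha).le⟩

lemma sSup_lt_of_lt_cof {s : Set Ordinal.{0}} {c : Ordinal.{0}} (hc : 0 < c)
    (hs : ∀ a ∈ s, a < c) (hcard : #s < Cardinal.lift.{1} c.cof) : sSup s < c := by
  rcases s.eq_empty_or_nonempty with rfl | hne
  · simpa using hc
  · obtain ⟨a, ha, hla⟩ := Cardinal.lt_lift_iff.mp hcard
    obtain ⟨e⟩ : Nonempty (a.out ≃ s) := by
      rw [← Cardinal.lift_mk_eq'.{0,1}]
      rw [Cardinal.mk_out, hla, Cardinal.lift_id']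
    have hr : Set.range (fun i : a.out => (e i : Ordinal.{0})) = s := by
      have : (fun i : a.out => (e i : Ordinal.{0})) = Subtype.val ∘ e := rfl
      rw [this, Set.range_comp, e.range_eq_univ, Set.image_univ, Subtype.range_coe]
    have h := Ordinal.iSup_lt_ord_lift (f := fun i : a.out => (e i : Ordinal.{0})) (c := c)
      (by rwa [Cardinal.lift_id, Cardinal.mk_out]) (fun i => hs _ (e i).2)
    rwa [iSup, hr] at h

theorem stmt17 (μ θ κ : Cardinal.{0}) (L : Ordinal.{0})
    (hθ : θ = (μ.ord).cof) (hμinf : ℵ₀ ≤ μ) (hsing : θ < μ)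
    (hκreg : κ.IsRegular) (hθκ : Order.succ θ < κ) (hκμ : κ < μ)
    (hL : L = (Order.succ μ).ord)
    (M : CovMatrix θ L) (hMtr : M.IsTransitive) (hMun : M.IsUniform)
    (A : Set (Set Ordinal.{0}))
    (hA : A = {x | x ∈ Pk κ L ∧ θ < (ssupS x).cof})
    (γ : Set Ordinal.{0} → Ordinal.{0})
    -- γ_x is least with the downward-coherence property:
    (hγ : ∀ x ∈ A,
      (γ x < L ∧ ∀ β : Ordinal.{0}, γ x ≤ β → β < L →
        ∃ i : Ordinal.{0}, i < θ.ord ∧ ∀ j : Ordinal.{0}, i ≤ j → j < θ.ord →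
          x ∩ M.D j β = x ∩ M.D j (γ x)) ∧
      ∀ δ : Ordinal.{0}, δ < γ x →
        ¬ (δ < L ∧ ∀ β : Ordinal.{0}, δ ≤ β → β < L →
            ∃ i : Ordinal.{0}, i < θ.ord ∧ ∀ j : Ordinal.{0}, i ≤ j → j < θ.ord →
              x ∩ M.D j β = x ∩ M.D j δ))
    (S : Set Ordinal.{0} → Set (Set Ordinal.{0}))
    (hS : ∀ x : Set Ordinal.{0}, S x =
      {t | ∃ i : Ordinal.{0}, i < θ.ord ∧ t = x ∩ M.D i (γ x) ∧
        supS (x ∩ M.D i (γ x)) = supS x}) :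
    -- 𝒮 = ⟨S_x : x ∈ A⟩ is a narrow concrete 𝒫_κ λ-system of width ≤ θ:
    (∀ y ∈ Pk κ L, ∃ x ∈ A, y ⊆ x) ∧
    (∀ x ∈ A, (S x).Nonempty) ∧
    (∀ x ∈ A, ∀ t ∈ S x, t ⊆ x) ∧
    (∀ x ∈ A, ∀ y ∈ A, x ⊆ y → ∃ t ∈ S y, t ∩ x ∈ S x) ∧
    (∀ x ∈ A, #(S x) ≤ Cardinal.lift.{1} θ) := by
  subst hA
  have hθinf : ℵ₀ ≤ θ := by
    rw [hθ]; exact Ordinal.aleph0_le_cof.2 (Cardinal.isSuccLimit_ord hμinf)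
  have hθκ' : θ < κ := lt_trans (Order.lt_succ θ) hθκ
  have hκinf : ℵ₀ ≤ κ := hθinf.trans hθκ'.le
  have hμL : ℵ₀ ≤ Order.succ μ := hμinf.trans (Order.le_succ μ)
  have hLlim : Order.IsSuccLimit L := hL ▸ Cardinal.isSuccLimit_ord hμL
  have hLpos : 0 < L := hLlim.pos
  have cofL : L.cof = Order.succ μ := by
    rw [hL]; exact (Cardinal.isRegular_succ hμinf).cof_eq
  have hθordlim : Order.IsSuccLimit θ.ord := Cardinal.isSuccLimit_ord hθinf
  have haddL : ∀ {a b : Ordinal.{0}}, a < L → b < L → a + b < L := by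
    intro a b haL hbL
    rw [hL, Cardinal.lt_ord] at haL hbL ⊢
    rw [Ordinal.card_add]
    exact Cardinal.add_lt_of_lt hμL haL hbL
  have hssupL : ∀ y ∈ Pk κ L, ssupS y < L := by
    intro y hy
    refine sSup_lt_of_lt_cof hLpos ?_ ?_
    · rintro a ⟨b, hb, rfl⟩
      exact hLlim.succ_lt (hy.1 b hb)
    · rw [cofL]
      calc #(Order.succ '' y) ≤ #y := Cardinal.mk_image_le
        _ < Cardinal.lift.{1} κ := hy.2
        _ ≤ Cardinal.lift.{1} (Order.succ μ) :=
            Cardinal.lift_le.2 (le_of_lt (hκμ.trans (Order.lt_succ μ)))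
  -- basic facts about x ∈ A
  have hAfacts : ∀ x ∈ {x | x ∈ Pk κ L ∧ θ < (ssupS x).cof},
      x.Nonempty ∧ (∀ a ∈ x, ∃ b ∈ x, a < b) ∧ ssupS x = supS x ∧ 0 < supS x := by
    rintro x ⟨hxPk, hcof⟩
    have hbddx : BddAbove x := bddAbove_of_forall_lt hxPk.1
    have hbdds : BddAbove (Order.succ '' x) := bddAbove_of_forall_lt
      (by rintro _ ⟨b, hb, rfl⟩; exact hLlim.succ_lt (hxPk.1 b hb))
    have hne : x.Nonempty := by
      rcases x.eq_empty_or_nonempty with rfl | hne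
      · exfalso
        have : ssupS (∅ : Set Ordinal.{0}) = 0 := by
          simp [ssupS, csSup_empty]
        rw [this, Ordinal.cof_zero] at hcof
        exact absurd hcof (by simp)
      · exact hne
    have hnomax : ∀ a ∈ x, ∃ b ∈ x, a < b := by
      by_contra h
      push_neg at h
      obtain ⟨a, ha, hmax⟩ := h
      have : ssupS x = Order.succ a := by
        apply le_antisymm
        · refine csSup_le (hne.image _) ?_
          rintro _ ⟨b, hb, rfl⟩
          exact Order.succ_le_succ (hmax b hb)
        · exact le_csSup hbdds (Set.mem_image_of_mem _ ha)
      rw [this, Ordinal.cof_succ] at hcof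
      exact Cardinal.aleph0_ne_zero (Cardinal.lt_one_iff_zero.1 (hθinf.trans_lt hcof))
    have heq : ssupS x = supS x := by
      apply le_antisymm
      · refine csSup_le (hne.image _) ?_
        rintro _ ⟨a, ha, rfl⟩
        obtain ⟨b, hb, hab⟩ := hnomax a ha
        exact (Order.succ_le_of_lt hab).trans (le_csSup hbddx hb)
      · refine csSup_le hne fun a ha => ?_
        exact (Order.le_succ a).trans (le_csSup hbdds (Set.mem_image_of_mem _ ha))
    refine ⟨hne, hnomax, heq, ?_⟩
    by_contra h
    push_neg at h
    have h0 : supS x = 0 := le_antisymm h zero_le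
    rw [heq, h0, Ordinal.cof_zero] at hcof
    exact absurd hcof (by simp)
  -- every element of x lies in some column of γ x
  have memcol : ∀ x ∈ {x | x ∈ Pk κ L ∧ θ < (ssupS x).cof},
      ∀ α ∈ x, ∃ j, j < θ.ord ∧ α ∈ M.D j (γ x) := by
    intro x hxA α hαx
    obtain ⟨⟨hγL, hγcoh⟩, -⟩ := hγ x hxA
    have hαL : α < L := hxA.1.1 α hαx
    set β := max (γ x) (Order.succ α) with hβ
    have hβL : β < L := max_lt hγL (hLlim.succ_lt hαL)
    obtain ⟨i, hiθ, hi⟩ := hγcoh β (le_max_left _ _) hβL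
    have hαβ : α ∈ Set.Iio β := lt_of_lt_of_le (Order.lt_succ α) (le_max_right _ _)
    rw [← M.union β hβL] at hαβ
    simp only [Set.mem_iUnion, Set.mem_Iio, exists_prop] at hαβ
    obtain ⟨i0, hi0θ, hαD⟩ := hαβ
    have hjθ : max i i0 < θ.ord := max_lt hiθ hi0θ
    refine ⟨max i i0, hjθ, ?_⟩
    have hmem : α ∈ x ∩ M.D (max i i0) β :=
      ⟨hαx, M.mono (le_max_right i i0) hjθ hβL hαD⟩
    rw [hi (max i i0) (le_max_left _ _) hjθ] at hmem
    exact hmem.2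
  -- key: some column captures the supremum
  have key : ∀ x ∈ {x | x ∈ Pk κ L ∧ θ < (ssupS x).cof},
      ∃ i, i < θ.ord ∧ supS (x ∩ M.D i (γ x)) = supS x := by
    intro x hxA
    obtain ⟨hne, _, heq, hpos⟩ := hAfacts x hxA
    have hbddx : BddAbove x := bddAbove_of_forall_lt hxA.1.1
    by_contra h
    push_neg at h
    set E := (fun i => supS (x ∩ M.D i (γ x))) '' Set.Iio θ.ord with hE
    have hElt : ∀ e ∈ E, e < supS x := by
      rintro _ ⟨i, hi, rfl⟩
      dsimp only
      refine lt_of_le_of_ne ?_ (h i hi)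
      rcases (x ∩ M.D i (γ x)).eq_empty_or_nonempty with he | hne'
      · rw [he]
        show sSup (∅ : Set Ordinal.{0}) ≤ _
        simp [csSup_empty]
      · exact csSup_le_csSup hbddx hne' Set.inter_subset_left
    have hbddE : BddAbove E := ⟨supS x, fun e he => (hElt e he).le⟩
    have hcard : #E < Cardinal.lift.{1} (supS x).cof := by
      calc #E ≤ #(Set.Iio θ.ord) := Cardinal.mk_image_le
        _ = Cardinal.lift.{1} θ := by rw [Ordinal.mk_Iio_ordinal, Cardinal.card_ord]
        _ < Cardinal.lift.{1} (supS x).cof := by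
            rw [Cardinal.lift_lt, ← heq]; exact hxA.2
    have hEsup : sSup E < supS x := sSup_lt_of_lt_cof hpos hElt hcard
    have hle : supS x ≤ sSup E := by
      refine csSup_le hne fun α hα => ?_
      obtain ⟨j, hj, hαD⟩ := memcol x hxA α hα
      have h1 : α ≤ supS (x ∩ M.D j (γ x)) :=
        le_csSup (hbddx.mono Set.inter_subset_left) ⟨hα, hαD⟩
      exact h1.trans (le_csSup hbddE ⟨j, hj, rfl⟩)
    exact absurd hEsup (not_lt.2 hle)
  -- monotonicity of the sup condition
  have mono : ∀ x ∈ {x | x ∈ Pk κ L ∧ θ < (ssupS x).cof}, ∀ i j : Ordinal.{0}, i ≤ j → j < θ.ord →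
      supS (x ∩ M.D i (γ x)) = supS x → supS (x ∩ M.D j (γ x)) = supS x := by
    intro x hxA i j hij hjθ hi
    obtain ⟨hne, _, heq, hpos⟩ := hAfacts x hxA
    obtain ⟨⟨hγL, -⟩, -⟩ := hγ x hxA
    have hbddx : BddAbove x := bddAbove_of_forall_lt hxA.1.1
    have hsub : x ∩ M.D i (γ x) ⊆ x ∩ M.D j (γ x) :=
      Set.inter_subset_inter_right x (M.mono hij hjθ hγL)
    have hne' : (x ∩ M.D i (γ x)).Nonempty := by
      rcases (x ∩ M.D i (γ x)).eq_empty_or_nonempty with he | hne'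
      · exfalso
        rw [he] at hi
        have : supS x = 0 := by
          rw [← hi]; show sSup (∅ : Set Ordinal.{0}) = 0; simp [csSup_empty]
        exact absurd (this ▸ hpos) (lt_irrefl 0)
      · exact hne'
    apply le_antisymm
    · exact csSup_le_csSup hbddx (hne'.mono hsub) Set.inter_subset_left
    · rw [← hi]
      exact csSup_le_csSup (hbddx.mono Set.inter_subset_left) hne' hsub
  refine ⟨?_, ?_, ?_, ?_, ?_⟩
  · -- cofinality of A
    intro y hy
    have hyL : ∀ a ∈ y, a < L := hy.1
    set σ := ssupS y with hσ
    have hσL : σ < L := hssupL y hy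
    set T := Order.succ θ with hT
    have hTinf : ℵ₀ ≤ T := hθinf.trans (Order.le_succ θ)
    have hTreg : T.IsRegular := Cardinal.isRegular_succ hθinf
    have hTordlim : Order.IsSuccLimit T.ord := Cardinal.isSuccLimit_ord hTinf
    have hTordL : T.ord < L := by
      rw [hL]; exact Cardinal.ord_lt_ord.2 (hθκ.trans (hκμ.trans (Order.lt_succ μ)))
    set C := (fun ξ => σ + ξ) '' Set.Iio T.ord with hC
    set x := y ∪ C with hxdef
    have hCL : ∀ a ∈ C, a < L := by
      rintro _ ⟨ξ, hξ, rfl⟩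
      exact haddL hσL (lt_trans hξ hTordL)
    have hxL : ∀ a ∈ x, a < L := fun a ha => ha.elim (hyL a) (hCL a)
    have hbddsx : BddAbove (Order.succ '' x) := bddAbove_of_forall_lt
      (by rintro _ ⟨a, ha, rfl⟩; exact hLlim.succ_lt (hxL a ha))
    have hσmem : σ ∈ C := ⟨0, hTordlim.pos, by simp⟩
    have hssupx : ssupS x = σ + T.ord := by
      apply le_antisymm
      · refine csSup_le ⟨Order.succ σ,
          Set.mem_image_of_mem _ (Set.mem_union_right y hσmem)⟩ ?_
        rintro _ ⟨a, ha, rfl⟩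
        rcases ha with ha | ⟨ξ, hξ, rfl⟩
        · have hb1 : Order.succ a ≤ σ := le_csSup (bddAbove_of_forall_lt
            (by rintro _ ⟨b, hb, rfl⟩; exact hLlim.succ_lt (hyL b hb)))
            (Set.mem_image_of_mem _ ha)
          exact hb1.trans (le_self_add (a := σ) (b := T.ord))
        · rw [← Ordinal.add_succ]
          exact add_le_add_right (Order.succ_le_of_lt hξ) σ
      · rw [Ordinal.add_le_iff_of_isSuccLimit hTordlim]
        intro ξ hξ
        exact le_of_lt ((Order.lt_succ (σ + ξ)).trans_le
          (le_csSup hbddsx (Set.mem_image_of_mem _ (Set.mem_union_right y ⟨ξ, hξ, rfl⟩))))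
    have hcofx : (ssupS x).cof = T := by
      rw [hssupx, Ordinal.cof_add _ hTordlim.pos.ne', hTreg.cof_eq]
    refine ⟨x, ⟨⟨hxL, ?_⟩, ?_⟩, Set.subset_union_left⟩
    · have hC2 : #C < Cardinal.lift.{1} κ := by
        calc #C ≤ #(Set.Iio T.ord) := Cardinal.mk_image_le
          _ = Cardinal.lift.{1} T := by rw [Ordinal.mk_Iio_ordinal, Cardinal.card_ord]
          _ < Cardinal.lift.{1} κ := Cardinal.lift_lt.2 hθκ
      calc #x ≤ #y + #C := Cardinal.mk_union_le _ _
        _ < Cardinal.lift.{1} κ := Cardinal.add_lt_of_lt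
            (Cardinal.aleph0_le_lift.2 hκinf) hy.2 hC2
    · rw [hcofx]; exact Order.lt_succ θ
  · -- nonemptiness of S x
    intro x hxA
    obtain ⟨i, hiθ, hieq⟩ := key x hxA
    exact ⟨x ∩ M.D i (γ x), by rw [hS]; exact ⟨i, hiθ, rfl, hieq⟩⟩
  · -- S x consists of subsets of x
    intro x _ t ht
    rw [hS] at ht
    obtain ⟨i, -, rfl, -⟩ := ht
    exact Set.inter_subset_left
  · -- coherence
    intro x hxA y hyA hxy
    obtain ⟨⟨hγxL, hcohx⟩, -⟩ := hγ x hxA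
    obtain ⟨⟨hγyL, hcohy⟩, -⟩ := hγ y hyA
    set β := max (γ x) (γ y) with hβ
    have hβL : β < L := max_lt hγxL hγyL
    obtain ⟨i1, hi1, h1⟩ := hcohx β (le_max_left _ _) hβL
    obtain ⟨i2, hi2, h2⟩ := hcohy β (le_max_right _ _) hβL
    obtain ⟨ix, hixθ, hxeq⟩ := key x hxA
    obtain ⟨iy, hiyθ, hyeq⟩ := key y hyA
    set j := max (max i1 i2) (max ix iy) with hj
    have hjθ : j < θ.ord := max_lt (max_lt hi1 hi2) (max_lt hixθ hiyθ)
    have e1 : x ∩ M.D j β = x ∩ M.D j (γ x) :=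
      h1 j ((le_max_left i1 i2).trans (le_max_left _ _)) hjθ
    have e2 : y ∩ M.D j β = y ∩ M.D j (γ y) :=
      h2 j ((le_max_right i1 i2).trans (le_max_left _ _)) hjθ
    refine ⟨y ∩ M.D j (γ y), ?_, ?_⟩
    · rw [hS]
      exact ⟨j, hjθ, rfl, mono y hyA iy j ((le_max_right ix iy).trans (le_max_right _ _)) hjθ hyeq⟩
    · have hset : (y ∩ M.D j (γ y)) ∩ x = x ∩ M.D j (γ x) := by
        ext α
        constructor
        · rintro ⟨hαt, hαx⟩
          rw [← e2] at hαt
          rw [← e1]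
          exact ⟨hαx, hαt.2⟩
        · rintro ⟨hαx, hαD⟩
          have hxβ : α ∈ x ∩ M.D j β := by rw [e1]; exact ⟨hαx, hαD⟩
          have hyβ : α ∈ y ∩ M.D j β := ⟨hxy hαx, hxβ.2⟩
          rw [e2] at hyβ
          exact ⟨hyβ, hαx⟩
      rw [hset, hS]
      exact ⟨j, hjθ, rfl, mono x hxA ix j ((le_max_left ix iy).trans (le_max_right _ _)) hjθ hxeq⟩
  · -- narrowness
    intro x _
    have hsub : S x ⊆ (fun i => x ∩ M.D i (γ x)) '' Set.Iio θ.ord := by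
      intro t ht
      rw [hS] at ht
      obtain ⟨i, hi, rfl, -⟩ := ht
      exact ⟨i, hi, rfl⟩
    calc #(S x) ≤ #((fun i => x ∩ M.D i (γ x)) '' Set.Iio θ.ord) :=
        Cardinal.mk_le_mk_of_subset hsub
      _ ≤ #(Set.Iio θ.ord) := Cardinal.mk_image_le
      _ = Cardinal.lift.{1} θ := by rw [Ordinal.mk_Iio_ordinal, Cardinal.card_ord]
end
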